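/- Let θ ∈ (ℝ/ℤ)∖{0} be rational. Then the combinatorial Hubbard tree H_θ = X_θ ∪ P_θ and the set cluster(S_θ) of accumulation points of S_θ in 𝕋 are both compact and F-forward-invariant (i.e., F maps each set into itself); moreover cluster(S_θ) ⊆ H_θ and the set H_θ ∖ cluster(S_θ) is finite. -/

import Mathlib

open Set Filter

/-- The circle `ℝ/ℤ`. -/
abbrev 𝕊 := AddCircle (1 : ℝ)

/-- The torus `𝕋 = (ℝ/ℤ) × (ℝ/ℤ)`. -/
abbrev 𝕋 := 𝕊 × 𝕊

/-- The doubling map `τ(x) = 2x` on the circle. -/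
noncomputable def dbl : 𝕊 → 𝕊 := fun x => x + x

/-- The doubling map `F(x, y) = (2x, 2y)` on the torus. -/
noncomputable def F : 𝕋 → 𝕋 := fun p => (p.1 + p.1, p.2 + p.2)

/-- The open arc of `(ℝ/ℤ) ∖ {a, b}` containing `z`, i.e. the connected component of
the complement of `{a, b}` containing `z`. -/
def arcAt (a b z : 𝕊) : Set 𝕊 := connectedComponentIn ({a, b}ᶜ : Set 𝕊) z

/-- The good region `G(a,b)` of a leaf with distinct endpoints `a, b`: the set of pairs
`(x, y)` such that `x` and `y` both lie in the closure of one and the same of the two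
open arcs of `(ℝ/ℤ) ∖ {a, b}`. -/
def goodPair (a b : 𝕊) : Set 𝕋 :=
  {p | ∃ z ∈ ({a, b}ᶜ : Set 𝕊),
        p.1 ∈ closure (arcAt a b z) ∧ p.2 ∈ closure (arcAt a b z)}

/-- The good region `G(S)` of a set `S ⊆ 𝕋`: the intersection of the good regions of
all off-diagonal points of `S`. -/
def good (S : Set 𝕋) : Set 𝕋 :=
  {p | ∀ q ∈ S, q.1 ≠ q.2 → p ∈ goodPair q.1 q.2}

/-- `α ∈ ℝ/ℤ` is periodic under the doubling map. -/
noncomputable def IsPer (α : 𝕊) : Prop := ∃ n > 0, dbl^[n] α = α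

/-- The pre-major leaves: `b 0` consists of the two orderings of the major leaf
`{θ/2, (θ+1)/2}`, and `b (i+1) = (F⁻¹(b i) ∩ G(b i)) ∪ b i`. -/
noncomputable def preSeq (θ : ℝ) : ℕ → Set 𝕋
  | 0 => {(((θ / 2 : ℝ) : 𝕊), (((θ + 1) / 2 : ℝ) : 𝕊)),
          ((((θ + 1) / 2 : ℝ) : 𝕊), ((θ / 2 : ℝ) : 𝕊))}
  | i + 1 => (F ⁻¹' preSeq θ i ∩ good (preSeq θ i)) ∪ preSeq θ i

/-- The set `Pre_θ` of pre-major leaves. -/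
noncomputable def Pre (θ : ℝ) : Set 𝕋 := ⋃ i, preSeq θ i

/-- `L_θ`: the set of accumulation points of `Pre_θ` lying off the diagonal. -/
noncomputable def Lset (θ : ℝ) : Set 𝕋 :=
  {p | AccPt p (Filter.principal (Pre θ)) ∧ p.1 ≠ p.2}

open Classical in
/-- `2⁻¹θ`: the periodic element among `{θ/2, (θ+1)/2}` if `θ` is periodic, and `θ/2`
otherwise. -/
noncomputable def halfTheta (θ : ℝ) : 𝕊 :=
  if IsPer ((θ : ℝ) : 𝕊) then
    (if IsPer ((θ / 2 : ℝ) : 𝕊) then ((θ / 2 : ℝ) : 𝕊) else (((θ + 1) / 2 : ℝ) : 𝕊))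
  else ((θ / 2 : ℝ) : 𝕊)

/-- The post-major angle set `P^S_θ = {2⁻¹θ} ∪ {2ⁿθ : n ≥ 0}`. -/
noncomputable def PS (θ : ℝ) : Set 𝕊 :=
  {halfTheta θ} ∪ {x | ∃ n : ℕ, x = dbl^[n] ((θ : ℝ) : 𝕊)}

/-- `(x, y)` separates `P_θ`: `x ≠ y` and both open arcs of `(ℝ/ℤ) ∖ {x, y}` contain a
point of `P^S_θ`. -/
noncomputable def SepP (θ : ℝ) (p : 𝕋) : Prop :=
  p.1 ≠ p.2 ∧ ∃ u ∈ PS θ, ∃ v ∈ PS θ,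
    u ∈ ({p.1, p.2}ᶜ : Set 𝕊) ∧ v ∈ ({p.1, p.2}ᶜ : Set 𝕊) ∧ v ∉ arcAt p.1 p.2 u

/-- `(x, y)` intersects `P_θ`: `x ∈ P^S_θ` or `y ∈ P^S_θ`. -/
noncomputable def IntP (θ : ℝ) (p : 𝕋) : Prop := p.1 ∈ PS θ ∨ p.2 ∈ PS θ

/-- `X_θ`: the points of `L_θ` which separate or intersect `P_θ`. -/
noncomputable def Xset (θ : ℝ) : Set 𝕋 :=
  {p ∈ Lset θ | SepP θ p ∨ IntP θ p}

/-- The diagonal copy `P_θ` of the post-major angle set in the torus. -/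
noncomputable def Pdiag (θ : ℝ) : Set 𝕋 := {p | p.1 = p.2 ∧ p.1 ∈ PS θ}

/-- `S_θ`: the pre-major leaves which separate or intersect `P_θ`. -/
noncomputable def Sset (θ : ℝ) : Set 𝕋 :=
  {p ∈ Pre θ | SepP θ p ∨ IntP θ p}

/-- The set of accumulation points of `S_θ` in the torus. -/
noncomputable def clusterS (θ : ℝ) : Set 𝕋 :=
  {p | AccPt p (Filter.principal (Sset θ))}

/-- The combinatorial Hubbard tree `H_θ = X_θ ∪ P_θ`. -/
noncomputable def Hset (θ : ℝ) : Set 𝕋 := Xset θ ∪ Pdiag θ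


open Topology

set_option linter.unusedSectionVars false
set_option linter.unusedVariables false

noncomputable def rep (z : 𝕊) : ℝ := ((AddCircle.equivIco 1 0 z : Ico (0:ℝ) (0+1)) : ℝ)

lemma rep_mem (z : 𝕊) : rep z ∈ Ico (0:ℝ) 1 := by
  have := (AddCircle.equivIco 1 0 z).2
  simpa [rep] using this

lemma rep_nonneg (z : 𝕊) : 0 ≤ rep z := (rep_mem z).1
lemma rep_lt_one (z : 𝕊) : rep z < 1 := (rep_mem z).2

lemma rep_coe (x : ℝ) : rep (x : 𝕊) = Int.fract x := by
  have := AddCircle.coe_equivIco_mk_apply (1:ℝ) x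
  simpa [rep] using this

lemma coe_int_eq_zero (n : ℤ) : ((n : ℝ) : 𝕊) = 0 := by
  rw [QuotientAddGroup.eq_zero_iff]
  exact ⟨n, by simp⟩

lemma coe_fract (x : ℝ) : ((Int.fract x : ℝ) : 𝕊) = (x : 𝕊) := by
  have h : Int.fract x = x + ((-⌊x⌋ : ℤ) : ℝ) := by rw [Int.fract]; push_cast; ring
  rw [h, QuotientAddGroup.mk_add, coe_int_eq_zero, add_zero]

lemma coe_rep (z : 𝕊) : ((rep z : ℝ) : 𝕊) = z := by
  induction z using QuotientAddGroup.induction_on with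
  | H x => rw [show ((x : ℝ) : 𝕊) = (QuotientAddGroup.mk x : 𝕊) from rfl] at *
           rw [rep_coe]; exact coe_fract x

lemma rep_coe_of_mem {x : ℝ} (h : x ∈ Ico (0:ℝ) 1) : rep (x : 𝕊) = x := by
  rw [rep_coe]; exact Int.fract_eq_self.2 ⟨h.1, h.2⟩

lemma rep_injective {z w : 𝕊} (h : rep z = rep w) : z = w := by
  rw [← coe_rep z, ← coe_rep w, h]

lemma rep_zero : rep (0 : 𝕊) = 0 := by
  have : ((0:ℝ) : 𝕊) = (0 : 𝕊) := by norm_num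
  rw [← this, rep_coe_of_mem] ; norm_num

lemma rep_eq_zero_iff {z : 𝕊} : rep z = 0 ↔ z = 0 := by
  constructor
  · intro h; have := coe_rep z; rw [h] at this; rw [← this]; norm_num
  · rintro rfl; exact rep_zero

lemma rep_pos {z : 𝕊} (hz : z ≠ 0) : 0 < rep z :=
  lt_of_le_of_ne (rep_nonneg z) (fun h => hz (rep_eq_zero_iff.1 h.symm))

lemma rep_add_cases (z w : 𝕊) : rep (z + w) = rep z + rep w ∨ rep (z + w) = rep z + rep w - 1 := by
  have key : ((rep z + rep w : ℝ) : 𝕊) = z + w := by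
    rw [QuotientAddGroup.mk_add, coe_rep, coe_rep]
  rw [← key, rep_coe]
  rcases lt_or_ge (rep z + rep w) 1 with h | h
  · left; exact Int.fract_eq_self.2 ⟨by have := rep_nonneg z; have := rep_nonneg w; linarith, h⟩
  · right
    have h2 : rep z + rep w - 1 ∈ Ico (0:ℝ) 1 := by
      constructor
      · linarith
      · have := rep_lt_one z; have := rep_lt_one w; linarith
    have h3 : Int.fract (rep z + rep w) = Int.fract (rep z + rep w - 1) := by
      rw [show rep z + rep w - 1 = rep z + rep w + ((-1 : ℤ) : ℝ) by push_cast; ring, Int.fract_add_intCast]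
    rw [h3, Int.fract_eq_self.2 ⟨h2.1, h2.2⟩]

lemma rep_neg {z : 𝕊} (hz : z ≠ 0) : rep (-z) = 1 - rep z := by
  have h0 : 0 < rep z := rep_pos hz
  have key : ((1 - rep z : ℝ) : 𝕊) = -z := by
    have : (1 : ℝ) - rep z = -(rep z) + ((1:ℤ) : ℝ) := by push_cast; ring
    rw [this, QuotientAddGroup.mk_add, coe_int_eq_zero, add_zero, QuotientAddGroup.mk_neg, coe_rep]
  rw [← key, rep_coe_of_mem]
  constructor
  · have := rep_lt_one z; linarith
  · linarith

lemma rep_sub_eq_zero_iff {z w : 𝕊} : rep (z - w) = 0 ↔ z = w := by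
  rw [rep_eq_zero_iff, sub_eq_zero]

lemma rep_sub_rep (z w : 𝕊) : rep (z - w) = rep z - rep w ∨ rep (z - w) = rep z - rep w + 1 := by
  rcases rep_add_cases (z - w) w with h | h
  · simp only [sub_add_cancel] at h; left; linarith
  · simp only [sub_add_cancel] at h; right; linarith

example : True := trivial


noncomputable def arc (x y : 𝕊) : Set 𝕊 := {z | 0 < rep (z - x) ∧ rep (z - x) < rep (y - x)}
noncomputable def carc (x y : 𝕊) : Set 𝕊 := {z | rep (z - x) ≤ rep (y - x)}

lemma mem_arc {x y z : 𝕊} : z ∈ arc x y ↔ 0 < rep (z - x) ∧ rep (z - x) < rep (y - x) := Iff.rfl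
lemma mem_carc {x y z : 𝕊} : z ∈ carc x y ↔ rep (z - x) ≤ rep (y - x) := Iff.rfl

lemma arc_subset_carc {x y : 𝕊} : arc x y ⊆ carc x y := fun z hz => le_of_lt hz.2

lemma self_mem_carc {x y : 𝕊} : x ∈ carc x y := by
  have : rep (x - x) = 0 := by rw [sub_self, rep_zero]
  rw [mem_carc, this]; exact rep_nonneg _

lemma right_mem_carc {x y : 𝕊} : y ∈ carc x y := by rw [mem_carc]

lemma sub_ne_zero_of_ne' {x y : 𝕊} (h : x ≠ y) : y - x ≠ 0 := by
  simp only [ne_eq, sub_eq_zero]; exact fun hh => h hh.symm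

lemma rep_rev {x y : 𝕊} (h : x ≠ y) : rep (x - y) = 1 - rep (y - x) := by
  rw [show x - y = -(y - x) by abel, rep_neg (sub_ne_zero_of_ne' h)]

lemma rep_diff_base {o z w : 𝕊} (h : rep (w - o) < rep (z - o)) :
    rep (z - w) = rep (z - o) - rep (w - o) := by
  have key : (z - o) - (w - o) = z - w := by abel
  rcases rep_sub_rep (z - o) (w - o) with h1 | h1 <;> rw [key] at h1
  · exact h1
  · exfalso; have := rep_lt_one (z - w); linarith

lemma rep_diff_base' {o z w : 𝕊} (h : rep (z - o) < rep (w - o)) :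
    rep (z - w) = rep (z - o) - rep (w - o) + 1 := by
  have key : (z - o) - (w - o) = z - w := by abel
  rcases rep_sub_rep (z - o) (w - o) with h1 | h1 <;> rw [key] at h1
  · exfalso; have := rep_nonneg (z - w); linarith
  · exact h1

lemma sub_left_inj' {z y x : 𝕊} (h : z - x = y - x) : z = y := by
  have := congrArg (· + x) h; simpa using this

/-- membership in the reversed arc, in coordinates based at `x`. -/
lemma mem_arc_rev {x y z : 𝕊} (hxy : x ≠ y) :
    z ∈ arc y x ↔ rep (y - x) < rep (z - x) := by
  have hc : 0 < rep (y - x) := rep_pos (sub_ne_zero_of_ne' hxy)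
  have hc1 : rep (y - x) < 1 := rep_lt_one _
  have hxy' : rep (x - y) = 1 - rep (y - x) := rep_rev hxy
  constructor
  · rintro ⟨h1, h2⟩
    rw [hxy'] at h2
    by_contra hle
    push_neg at hle
    rcases lt_or_eq_of_le hle with hlt | heq
    · rw [rep_diff_base' hlt] at h2
      have := rep_nonneg (z - x); linarith
    · have hzy : z = y := sub_left_inj' (rep_injective heq)
      rw [hzy, sub_self, rep_zero] at h1; exact lt_irrefl _ h1
  · intro h
    have h1 := rep_diff_base h
    constructor
    · rw [h1]; linarith
    · rw [h1, hxy']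
      have := rep_lt_one (z - x); linarith

lemma arc_disjoint {x y : 𝕊} (hxy : x ≠ y) : Disjoint (arc x y) (arc y x) := by
  rw [Set.disjoint_left]
  intro z hz1 hz2
  rw [mem_arc_rev hxy] at hz2
  exact lt_irrefl _ (lt_trans hz1.2 hz2)

lemma left_not_mem_arc {x y : 𝕊} : x ∉ arc x y := by
  intro h; rw [mem_arc, sub_self, rep_zero] at h; exact lt_irrefl _ h.1

lemma right_not_mem_arc {x y : 𝕊} : y ∉ arc x y := by
  intro h; exact lt_irrefl _ h.2

lemma ne_of_mem_arc {x y z : 𝕊} (h : z ∈ arc x y) : z ≠ x ∧ z ≠ y := by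
  constructor
  · rintro rfl; exact left_not_mem_arc h
  · rintro rfl; exact right_not_mem_arc h

lemma compl_pair_eq_arcs {x y : 𝕊} (hxy : x ≠ y) :
    ({x, y}ᶜ : Set 𝕊) = arc x y ∪ arc y x := by
  ext z
  simp only [mem_compl_iff, mem_insert_iff, mem_singleton_iff, not_or, mem_union]
  constructor
  · rintro ⟨hzx, hzy⟩
    have h0 : 0 < rep (z - x) := rep_pos (sub_ne_zero_of_ne' (Ne.symm hzx))
    rcases lt_trichotomy (rep (z - x)) (rep (y - x)) with h | h | h
    · exact Or.inl ⟨h0, h⟩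
    · exact absurd (sub_left_inj' (rep_injective h)) hzy
    · exact Or.inr ((mem_arc_rev hxy).2 h)
  · intro h
    rcases h with h | h
    · exact ⟨(ne_of_mem_arc h).1, (ne_of_mem_arc h).2⟩
    · exact ⟨(ne_of_mem_arc h).2, (ne_of_mem_arc h).1⟩


noncomputable def circmap (x : 𝕊) : ℝ → 𝕊 := fun t => x + (t : 𝕊)

lemma circmap_continuous (x : 𝕊) : Continuous (circmap x) := by
  have h1 : Continuous (fun t : ℝ => (t : 𝕊)) := AddCircle.continuous_mk' 1
  exact continuous_const.add h1

lemma arc_eq_image {x y : 𝕊} : arc x y = circmap x '' Ioo 0 (rep (y - x)) := by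
  ext z
  constructor
  · intro hz
    exact ⟨rep (z - x), ⟨hz.1, hz.2⟩, by simp [circmap, coe_rep]⟩
  · rintro ⟨t, ht, rfl⟩
    have h01 : t ∈ Ico (0:ℝ) 1 := ⟨le_of_lt ht.1, lt_trans ht.2 (rep_lt_one _)⟩
    have : rep (circmap x t - x) = t := by
      simp only [circmap, add_sub_cancel_left]
      exact rep_coe_of_mem h01
    exact ⟨by rw [this]; exact ht.1, by rw [this]; exact ht.2⟩

lemma carc_eq_image {x y : 𝕊} (hxy : x ≠ y) : carc x y = circmap x '' Icc 0 (rep (y - x)) := by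
  ext z
  constructor
  · intro hz
    exact ⟨rep (z - x), ⟨rep_nonneg _, hz⟩, by simp [circmap, coe_rep]⟩
  · rintro ⟨t, ht, rfl⟩
    have h01 : t ∈ Ico (0:ℝ) 1 := ⟨ht.1, lt_of_le_of_lt ht.2 (rep_lt_one _)⟩
    have : rep (circmap x t - x) = t := by
      simp only [circmap, add_sub_cancel_left]
      exact rep_coe_of_mem h01
    rw [mem_carc, this]; exact ht.2

lemma isOpen_arc {x y : 𝕊} : IsOpen (arc x y) := by
  rw [arc_eq_image]
  have : circmap x '' Ioo 0 (rep (y-x)) =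
      (Homeomorph.addLeft x) '' ((QuotientAddGroup.mk : ℝ → 𝕊) '' Ioo 0 (rep (y-x))) := by
    rw [Set.image_image]; rfl
  rw [this]
  exact (Homeomorph.addLeft x).isOpenMap _ (QuotientAddGroup.isOpenMap_coe _ isOpen_Ioo)

lemma isClosed_carc {x y : 𝕊} (hxy : x ≠ y) : IsClosed (carc x y) := by
  rw [carc_eq_image hxy]
  exact (isCompact_Icc.image (circmap_continuous x)).isClosed

lemma closure_arc {x y : 𝕊} (hxy : x ≠ y) : closure (arc x y) = carc x y := by
  apply Subset.antisymm
  · exact closure_minimal arc_subset_carc (isClosed_carc hxy)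
  · rw [carc_eq_image hxy, arc_eq_image]
    have hc : 0 < rep (y - x) := rep_pos (sub_ne_zero_of_ne' hxy)
    calc circmap x '' Icc 0 (rep (y-x)) = circmap x '' closure (Ioo 0 (rep (y-x))) := by
            rw [closure_Ioo (ne_of_lt hc)]
      _ ⊆ closure (circmap x '' Ioo 0 (rep (y-x))) :=
            image_closure_subset_closure_image (circmap_continuous x)

lemma carc_eq_arc_union {x y : 𝕊} (hxy : x ≠ y) : carc x y = arc x y ∪ {x, y} := by
  ext z
  simp only [mem_union, mem_insert_iff, mem_singleton_iff]
  constructor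
  · intro hz
    rcases eq_or_ne z x with rfl | hzx
    · exact Or.inr (Or.inl rfl)
    rcases lt_or_eq_of_le (show rep (z-x) ≤ rep (y-x) from hz) with h | h
    · exact Or.inl ⟨rep_pos (sub_ne_zero_of_ne' (Ne.symm hzx)), h⟩
    · exact Or.inr (Or.inr (sub_left_inj' (rep_injective h)))
  · rintro (h | rfl | rfl)
    · exact arc_subset_carc h
    · exact self_mem_carc
    · exact right_mem_carc

lemma arc_nonempty {x y : 𝕊} (hxy : x ≠ y) : (arc x y).Nonempty := by
  have hc : 0 < rep (y - x) := rep_pos (sub_ne_zero_of_ne' hxy)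
  rw [arc_eq_image]
  exact ⟨circmap x (rep (y-x)/2), mem_image_of_mem _ ⟨by linarith, by linarith⟩⟩

lemma isPreconnected_arc {x y : 𝕊} : IsPreconnected (arc x y) := by
  rw [arc_eq_image]
  exact (isPreconnected_Ioo).image _ (circmap_continuous x).continuousOn

lemma connectedComponentIn_of_union {α : Type*} [TopologicalSpace α] {A B : Set α} {z : α}
    (hA : IsOpen A) (hB : IsOpen B) (hd : Disjoint A B) (hpA : IsPreconnected A)
    (hz : z ∈ A) : connectedComponentIn (A ∪ B) z = A := by
  apply Subset.antisymm
  · have hsub := connectedComponentIn_subset (A ∪ B) z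
    have hzc : z ∈ connectedComponentIn (A ∪ B) z :=
      mem_connectedComponentIn (Or.inl hz)
    rcases (isPreconnected_connectedComponentIn).subset_or_subset hA hB hd hsub with h | h
    · exact h
    · exact ((Set.disjoint_left.1 hd hz) (h hzc)).elim
  · exact hpA.subset_connectedComponentIn hz subset_union_left

lemma arcAt_eq_left {x y z : 𝕊} (hxy : x ≠ y) (hz : z ∈ arc x y) :
    arcAt x y z = arc x y := by
  rw [arcAt, compl_pair_eq_arcs hxy]
  exact connectedComponentIn_of_union isOpen_arc isOpen_arc (arc_disjoint hxy)
    isPreconnected_arc hz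

lemma arcAt_eq_right {x y z : 𝕊} (hxy : x ≠ y) (hz : z ∈ arc y x) :
    arcAt x y z = arc y x := by
  rw [arcAt, compl_pair_eq_arcs hxy, union_comm]
  exact connectedComponentIn_of_union isOpen_arc isOpen_arc
    (arc_disjoint hxy).symm isPreconnected_arc hz

lemma goodPair_char {x y : 𝕊} (hxy : x ≠ y) : goodPair x y =
    {p : 𝕋 | (p.1 ∈ carc x y ∧ p.2 ∈ carc x y) ∨ (p.1 ∈ carc y x ∧ p.2 ∈ carc y x)} := by
  ext p
  constructor
  · rintro ⟨z, hz, h1, h2⟩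
    rw [compl_pair_eq_arcs hxy] at hz
    rcases hz with hz | hz
    · rw [arcAt_eq_left hxy hz, closure_arc hxy] at h1 h2
      exact Or.inl ⟨h1, h2⟩
    · rw [arcAt_eq_right hxy hz, closure_arc (Ne.symm hxy)] at h1 h2
      exact Or.inr ⟨h1, h2⟩
  · intro hp
    rcases hp with ⟨h1, h2⟩ | ⟨h1, h2⟩
    · obtain ⟨z, hz⟩ := arc_nonempty hxy
      refine ⟨z, ?_, ?_, ?_⟩
      · rw [compl_pair_eq_arcs hxy]; exact Or.inl hz
      · rw [arcAt_eq_left hxy hz, closure_arc hxy]; exact h1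
      · rw [arcAt_eq_left hxy hz, closure_arc hxy]; exact h2
    · obtain ⟨z, hz⟩ := arc_nonempty (Ne.symm hxy)
      refine ⟨z, ?_, ?_, ?_⟩
      · rw [compl_pair_eq_arcs hxy]; exact Or.inr hz
      · rw [arcAt_eq_right hxy hz, closure_arc (Ne.symm hxy)]; exact h1
      · rw [arcAt_eq_right hxy hz, closure_arc (Ne.symm hxy)]; exact h2

/-- crossing symmetry: if `z, w` are strictly separated by `{x,y}` then `x, y` are strictly
separated by `{z, w}`. -/
lemma cross_symm {x y z w : 𝕊} (hxy : x ≠ y) (hz : z ∈ arc x y) (hw : w ∈ arc y x) :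
    y ∈ arc z w ∧ x ∈ arc w z := by
  have hc : 0 < rep (y - x) := rep_pos (sub_ne_zero_of_ne' hxy)
  have hzx : 0 < rep (z - x) := hz.1
  have hzc : rep (z - x) < rep (y - x) := hz.2
  have hwc : rep (y - x) < rep (w - x) := (mem_arc_rev hxy).1 hw
  have hw1 : rep (w - x) < 1 := rep_lt_one _
  have hyz : rep (y - z) = rep (y - x) - rep (z - x) := rep_diff_base hzc
  have hwz : rep (w - z) = rep (w - x) - rep (z - x) := rep_diff_base (lt_trans hzc hwc)
  have hxw : rep (x - w) = 0 - rep (w - x) + 1 := by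
    have h0 : rep (x - x) = 0 := by rw [sub_self, rep_zero]
    have := rep_diff_base' (o := x) (z := x) (w := w) (by rw [h0]; exact lt_trans hc hwc)
    rw [h0] at this; exact this
  have hzw : rep (z - w) = rep (z - x) - rep (w - x) + 1 := rep_diff_base' (lt_trans hzc hwc)
  constructor
  · rw [mem_arc, hyz, hwz]; constructor <;> linarith
  · rw [mem_arc, hxw, hzw]; constructor <;> linarith

/-- strictly separated pairs are not good. -/
lemma not_good_of_cross {x y z w : 𝕊} (hxy : x ≠ y) (hz : z ∈ arc x y) (hw : w ∈ arc y x) :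
    (z, w) ∉ goodPair x y := by
  rw [goodPair_char hxy]
  rintro (⟨h1, h2⟩ | ⟨h1, h2⟩)
  · -- w ∈ carc x y contradicts w ∈ arc y x
    rw [mem_carc] at h2
    have := (mem_arc_rev hxy).1 hw
    exact absurd h2 (not_le.2 this)
  · -- z ∈ carc y x: rep (z - y) ≤ rep (x - y) = 1 - c
    rw [mem_carc] at h1
    have hc : 0 < rep (y - x) := rep_pos (sub_ne_zero_of_ne' hxy)
    have hzy : rep (z - y) = rep (z - x) - rep (y - x) + 1 := rep_diff_base' hz.2
    rw [hzy, rep_rev hxy] at h1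
    have := hz.1; linarith

noncomputable def nhd (ε : ℝ) (u : 𝕊) : Set 𝕊 := circmap u '' Ioo (-ε) ε

lemma isOpen_nhd {ε : ℝ} {u : 𝕊} : IsOpen (nhd ε u) := by
  have : nhd ε u = (Homeomorph.addLeft u) '' ((QuotientAddGroup.mk : ℝ → 𝕊) '' Ioo (-ε) ε) := by
    rw [Set.image_image]; rfl
  rw [this]
  exact (Homeomorph.addLeft u).isOpenMap _ (QuotientAddGroup.isOpenMap_coe _ isOpen_Ioo)

lemma self_mem_nhd {ε : ℝ} (hε : 0 < ε) (u : 𝕊) : u ∈ nhd ε u := by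
  refine ⟨0, ⟨by linarith, hε⟩, ?_⟩
  simp [circmap]

lemma coe_add_one (t : ℝ) : ((t + 1 : ℝ) : 𝕊) = (t : 𝕊) := by
  rw [QuotientAddGroup.mk_add, show ((1:ℝ) : 𝕊) = 0 by exact_mod_cast coe_int_eq_zero 1, add_zero]

lemma mem_nhd_iff {ε : ℝ} (hε : 0 < ε) (hε2 : ε ≤ 1/2) {u z : 𝕊} :
    z ∈ nhd ε u ↔ rep (z - u) < ε ∨ 1 - ε < rep (z - u) := by
  constructor
  · rintro ⟨t, ht, rfl⟩
    have hzu : rep (circmap u t - u) = rep ((t : ℝ) : 𝕊) := by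
      simp [circmap, add_sub_cancel_left]
    rcases le_or_gt 0 t with h0 | h0
    · left
      rw [hzu, rep_coe_of_mem ⟨h0, by linarith [ht.2]⟩]; exact ht.2
    · right
      have : ((t : ℝ) : 𝕊) = ((t + 1 : ℝ) : 𝕊) := (coe_add_one t).symm
      rw [hzu, this, rep_coe_of_mem ⟨by linarith [ht.1], by linarith⟩]
      linarith [ht.1]
  · intro h
    rcases h with h | h
    · exact ⟨rep (z - u), ⟨by linarith [rep_nonneg (z-u)], h⟩, by simp [circmap, coe_rep]⟩
    · refine ⟨rep (z - u) - 1, ⟨by linarith, by linarith [rep_lt_one (z-u)]⟩, ?_⟩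
      simp only [circmap]
      rw [show ((rep (z-u) - 1 : ℝ) : 𝕊) = ((rep (z-u) : ℝ) : 𝕊) by
        rw [← coe_add_one (rep (z-u) - 1)]; norm_num]
      rw [coe_rep]; abel


section AccUtils
variable {X : Type*} [TopologicalSpace X]

lemma acc_mono' {x : X} {S T : Set X} (h : S ⊆ T) (ha : AccPt x (𝓟 S)) :
    AccPt x (𝓟 T) := ha.mono (principal_mono.2 h)

lemma acc_nhds {x : X} {S : Set X} (ha : AccPt x (𝓟 S)) :
    ∀ U ∈ 𝓝 x, ∃ y ∈ U ∩ S, y ≠ x := accPt_iff_nhds.1 ha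

lemma acc_of_nhds {x : X} {S : Set X} (h : ∀ U ∈ 𝓝 x, ∃ y ∈ U ∩ S, y ≠ x) :
    AccPt x (𝓟 S) := accPt_iff_nhds.2 h

lemma acc_diff_finite [T1Space X] {x : X} {S K : Set X} (hK : K.Finite)
    (ha : AccPt x (𝓟 S)) : AccPt x (𝓟 (S \ K)) := by
  apply acc_of_nhds
  intro U hU
  have hKc : IsOpen ((K \ {x})ᶜ) := (hK.subset diff_subset).isClosed.isOpen_compl
  have hxm : x ∈ (K \ {x})ᶜ := by simp
  obtain ⟨y, ⟨hyU, hyS⟩, hyx⟩ := acc_nhds ha (U ∩ (K \ {x})ᶜ)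
    (inter_mem hU (hKc.mem_nhds hxm))
  refine ⟨y, ⟨hyU.1, hyS, ?_⟩, hyx⟩
  intro hyK
  exact (hyU.2 ⟨hyK, hyx⟩)

lemma acc_inter_open {x : X} {S U0 : Set X} (hU0 : IsOpen U0) (hx : x ∈ U0)
    (ha : AccPt x (𝓟 S)) : AccPt x (𝓟 (S ∩ U0)) := by
  apply acc_of_nhds
  intro U hU
  obtain ⟨y, ⟨hyU, hyS⟩, hyx⟩ := acc_nhds ha (U ∩ U0) (inter_mem hU (hU0.mem_nhds hx))
  exact ⟨y, ⟨hyU.1, hyS, hyU.2⟩, hyx⟩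

lemma acc_image [T1Space X] {Y : Type*} [TopologicalSpace Y] {f : X → Y} {x : X} {S : Set X}
    (hf : Continuous f) (hfin : (f ⁻¹' {f x}).Finite)
    (ha : AccPt x (𝓟 S)) : AccPt (f x) (𝓟 (f '' S)) := by
  apply acc_of_nhds
  intro V hV
  -- W : neighborhood of x avoiding other preimages of f x
  have hW : IsOpen ((f ⁻¹' {f x} \ {x})ᶜ) := (hfin.subset diff_subset).isClosed.isOpen_compl
  have hxW : x ∈ (f ⁻¹' {f x} \ {x})ᶜ := by simp
  obtain ⟨y, ⟨hyU, hyS⟩, hyx⟩ := acc_nhds ha ((f ⁻¹' V) ∩ (f ⁻¹' {f x} \ {x})ᶜ)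
    (inter_mem (hf.continuousAt.preimage_mem_nhds hV) (hW.mem_nhds hxW))
  refine ⟨f y, ⟨hyU.1, mem_image_of_mem f hyS⟩, ?_⟩
  intro hfy
  exact hyU.2 ⟨hfy, hyx⟩

lemma isClosed_acc [T1Space X] (S : Set X) : IsClosed {x | AccPt x (𝓟 S)} := by
  rw [← isOpen_compl_iff, isOpen_iff_mem_nhds]
  intro x hx
  simp only [mem_compl_iff, mem_setOf_eq] at hx
  rw [accPt_iff_nhds] at hx
  push_neg at hx
  obtain ⟨U, hU, hUprop⟩ := hx
  obtain ⟨U', hU'U, hU'o, hU'x⟩ := mem_nhds_iff.1 hU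
  rw [mem_nhds_iff]
  refine ⟨U', ?_, hU'o, hU'x⟩
  intro z hz hzacc
  simp only [mem_setOf_eq] at hzacc
  have hWo : IsOpen (({x} \ {z} : Set X)ᶜ) :=
    ((Set.finite_singleton x).subset diff_subset).isClosed.isOpen_compl
  have hzW : z ∈ ({x} \ {z} : Set X)ᶜ := by simp
  obtain ⟨y, ⟨⟨hyU', hyW⟩, hyS⟩, hyz⟩ := acc_nhds hzacc (U' ∩ ({x} \ {z})ᶜ)
    (inter_mem (hU'o.mem_nhds hz) (hWo.mem_nhds hzW))
  have hyx : y ≠ x := by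
    intro rfl'
    exact hyW ⟨by simp [rfl'], by simpa [rfl'] using hyz⟩
  exact hyx (hUprop y ⟨hU'U hyU', hyS⟩)

end AccUtils


/-! basic θ-facts -/

section ThetaBasics
variable {θ : ℝ} (hθ : θ ∈ Ioo (0:ℝ) 1)

noncomputable def aPt (θ : ℝ) : 𝕊 := ((θ / 2 : ℝ) : 𝕊)
noncomputable def bPt (θ : ℝ) : 𝕊 := (((θ + 1) / 2 : ℝ) : 𝕊)
noncomputable def tht (θ : ℝ) : 𝕊 := ((θ : ℝ) : 𝕊)

lemma dbl_coe (x : ℝ) : dbl ((x : ℝ) : 𝕊) = ((2 * x : ℝ) : 𝕊) := by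
  rw [dbl, show (2*x : ℝ) = x + x by ring, QuotientAddGroup.mk_add]

lemma dbl_iterate (n : ℕ) (x : ℝ) : dbl^[n] ((x : ℝ) : 𝕊) = ((2^n * x : ℝ) : 𝕊) := by
  induction n with
  | zero => simp
  | succ n ih =>
    rw [Function.iterate_succ_apply', ih, dbl_coe]
    norm_num [pow_succ]; ring_nf

include hθ

lemma rep_tht : rep (tht θ) = θ := by
  rw [tht, rep_coe_of_mem ⟨le_of_lt hθ.1, hθ.2⟩]

lemma tht_ne_zero : tht θ ≠ 0 := by
  intro h
  have := rep_eq_zero_iff.2 h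
  rw [rep_tht hθ] at this
  exact ne_of_gt hθ.1 this

lemma rep_aPt : rep (aPt θ) = θ / 2 := by
  rw [aPt, rep_coe_of_mem ⟨by linarith [hθ.1], by linarith [hθ.2]⟩]

lemma rep_bPt : rep (bPt θ) = (θ + 1) / 2 := by
  rw [bPt, rep_coe_of_mem ⟨by linarith [hθ.1], by linarith [hθ.2]⟩]

lemma aPt_ne_bPt : aPt θ ≠ bPt θ := by
  intro h
  have : rep (aPt θ) = rep (bPt θ) := by rw [h]
  rw [rep_aPt hθ, rep_bPt hθ] at this
  linarith

lemma rep_b_sub_a : rep (bPt θ - aPt θ) = 1/2 := by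
  have : bPt θ - aPt θ = (((θ+1)/2 - θ/2 : ℝ) : 𝕊) := by
    rw [bPt, aPt, ← QuotientAddGroup.mk_sub]
  rw [this, show ((θ+1)/2 - θ/2 : ℝ) = 1/2 by ring, rep_coe_of_mem (by norm_num)]

lemma rep_a_sub_b : rep (aPt θ - bPt θ) = 1/2 := by
  rw [rep_rev (aPt_ne_bPt hθ), rep_b_sub_a hθ]; norm_num

lemma dbl_aPt : dbl (aPt θ) = tht θ := by
  rw [aPt, dbl_coe, tht, show (2 * (θ/2) : ℝ) = θ by ring]

lemma dbl_bPt : dbl (bPt θ) = tht θ := by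
  rw [bPt, dbl_coe, tht, show (2 * ((θ+1)/2) : ℝ) = θ + 1 by ring, coe_add_one]

lemma halfTheta_cases : halfTheta θ = aPt θ ∨ halfTheta θ = bPt θ := by
  rw [halfTheta, aPt, bPt]
  split_ifs <;> simp

lemma dbl_halfTheta : dbl (halfTheta θ) = tht θ := by
  rcases halfTheta_cases hθ with h | h <;> rw [h]
  exacts [dbl_aPt hθ, dbl_bPt hθ]

lemma tht_mem_PS : tht θ ∈ PS θ := Or.inr ⟨0, by simp [tht]⟩

lemma dbl_mem_PS {u : 𝕊} (hu : u ∈ PS θ) : dbl u ∈ PS θ := by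
  rcases hu with hu | ⟨n, rfl⟩
  · rw [mem_singleton_iff] at hu
    rw [hu, dbl_halfTheta hθ]
    exact tht_mem_PS hθ
  · exact Or.inr ⟨n + 1, by rw [Function.iterate_succ_apply']⟩

lemma dbl_tht_ne_tht : dbl (tht θ) ≠ tht θ := by
  rw [dbl, tht, ne_eq, ← QuotientAddGroup.mk_add]
  intro h
  have h2 : ((θ + θ - θ : ℝ) : 𝕊) = 0 := by
    rw [QuotientAddGroup.mk_sub, h, sub_self]
  rw [show (θ + θ - θ : ℝ) = θ by ring] at h2
  exact tht_ne_zero hθ h2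

lemma PS_pair : ∀ u ∈ PS θ, ∃ w ∈ PS θ, w ≠ u := by
  intro u hu
  rcases eq_or_ne u (tht θ) with rfl | h
  · exact ⟨dbl (tht θ), dbl_mem_PS hθ (tht_mem_PS hθ), dbl_tht_ne_tht hθ⟩
  · exact ⟨tht θ, tht_mem_PS hθ, fun hh => h hh.symm⟩

end ThetaBasics

lemma PS_finite {θ : ℝ} (hrat : ∃ q : ℚ, (q : ℝ) = θ) : (PS θ).Finite := by
  obtain ⟨q, rfl⟩ := hrat
  apply Set.Finite.union (Set.finite_singleton _)
  have : {x : 𝕊 | ∃ n : ℕ, x = dbl^[n] (((q : ℝ) : ℝ) : 𝕊)} ⊆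
      (fun k : ℤ => ((k / (q.den : ℝ) : ℝ) : 𝕊)) '' (Icc 0 (q.den : ℤ)) := by
    rintro x ⟨n, rfl⟩
    rw [dbl_iterate]
    set m : ℤ := (2^n * q.num) % (q.den : ℤ) with hm
    have hden : (0:ℤ) < (q.den : ℤ) := by exact_mod_cast q.pos
    refine ⟨m, ⟨Int.emod_nonneg _ (ne_of_gt hden), le_of_lt ?_⟩, ?_⟩
    · exact lt_of_lt_of_le (Int.emod_lt_of_pos _ hden) le_rfl
    · -- ((m / den) : 𝕊) = ((2^n * q) : 𝕊)
      have hq : (q : ℝ) = (q.num : ℝ) / (q.den : ℝ) := by exact_mod_cast q.num_div_den.symm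
      have hdenR : ((q.den : ℝ)) ≠ 0 := by positivity
      obtain ⟨k, hk⟩ : ∃ k : ℤ, (2^n : ℤ) * q.num = k * (q.den : ℤ) + m := by
        refine ⟨((2^n : ℤ) * q.num) / (q.den : ℤ), ?_⟩
        rw [hm]
        have := Int.mul_ediv_add_emod ((2^n : ℤ) * q.num) (q.den : ℤ)
        linarith
      have : (2^n * (q:ℝ) : ℝ) = (m : ℝ) / (q.den : ℝ) + (k : ℝ) := by
        rw [hq]
        field_simp
        have hkR : ((2:ℝ)^n * (q.num:ℝ)) = (k:ℝ) * (q.den:ℝ) + (m:ℝ) := by exact_mod_cast hk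
        nlinarith [hkR]
      rw [show ((2^n * (q:ℝ) : ℝ) : 𝕊) = (((m : ℝ) / (q.den:ℝ) + (k:ℝ) : ℝ) : 𝕊) by rw [this],
        QuotientAddGroup.mk_add, coe_int_eq_zero, add_zero]
  exact Set.Finite.subset (Set.Finite.image _ (Set.finite_Icc _ _)) this


noncomputable def half : 𝕊 := ((1/2 : ℝ) : 𝕊)

lemma rep_half : rep half = 1/2 := by
  rw [half, rep_coe_of_mem (by norm_num)]

lemma rep_eq_half_iff {z : 𝕊} : rep z = 1/2 ↔ z = half := by
  constructor
  · intro h; exact rep_injective (by rw [h, rep_half])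
  · rintro rfl; exact rep_half

lemma addSelfZero {v : 𝕊} (h : v + v = 0) : v = 0 ∨ v = half := by
  have h0 : rep (v + v) = 0 := by rw [h, rep_zero]
  rcases rep_add_cases v v with hc | hc <;> rw [h0] at hc
  · left; exact rep_eq_zero_iff.1 (by linarith)
  · right; exact rep_eq_half_iff.1 (by linarith)

lemma dblfiber_finite (c : 𝕊) : {z : 𝕊 | z + z = c}.Finite := by
  rcases Set.eq_empty_or_nonempty {z : 𝕊 | z + z = c} with h | ⟨z0, hz0⟩
  · rw [h]; exact finite_empty
  · apply Set.Finite.subset ((Set.finite_singleton (z0 + half)).insert z0)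
    intro z hz
    have : (z - z0) + (z - z0) = 0 := by
      have : z + z = z0 + z0 := by rw [hz, hz0]
      rw [show (z - z0) + (z - z0) = (z + z) - (z0 + z0) by abel, this, sub_self]
    rcases addSelfZero this with h | h
    · left; rw [sub_eq_zero] at h; exact h
    · right; rw [sub_eq_iff_eq_add] at h; rw [h]; simp [mem_singleton_iff]; abel

lemma F_fiber_finite (p : 𝕋) : (F ⁻¹' {p}).Finite := by
  have hsub : F ⁻¹' {p} ⊆ {z : 𝕊 | z + z = p.1} ×ˢ {w : 𝕊 | w + w = p.2} := by
    rintro ⟨z, w⟩ hq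
    simp only [mem_preimage, mem_singleton_iff, F, Prod.ext_iff] at hq
    exact ⟨hq.1, hq.2⟩
  exact Set.Finite.subset ((dblfiber_finite p.1).prod (dblfiber_finite p.2)) hsub

lemma continuous_F : Continuous F := by
  unfold F
  exact ((continuous_fst.add continuous_fst).prodMk (continuous_snd.add continuous_snd))

section PreStruct
variable {θ : ℝ}

lemma preSeq_succ_subset (i : ℕ) : preSeq θ i ⊆ preSeq θ (i+1) := by
  intro q hq; exact Or.inr hq

lemma preSeq_mono {m n : ℕ} (h : m ≤ n) : preSeq θ m ⊆ preSeq θ n := by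
  induction n with
  | zero => rw [Nat.le_zero.1 h]
  | succ n ih =>
    rcases Nat.lt_or_ge m (n+1) with h' | h'
    · exact subset_trans (ih (Nat.lt_succ_iff.1 h')) (preSeq_succ_subset n)
    · rw [Nat.le_antisymm h h']

lemma base_mem_preSeq (n : ℕ) : (aPt θ, bPt θ) ∈ preSeq θ n :=
  preSeq_mono (Nat.zero_le n) (by left; rfl)

lemma preSeq_subset_Pre (n : ℕ) : preSeq θ n ⊆ Pre θ := subset_iUnion (preSeq θ) n

lemma level_ge {q : 𝕋} {N : ℕ} (hq : q ∈ Pre θ) (hqN : q ∉ preSeq θ N) :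
    ∃ l, N ≤ l ∧ F q ∈ preSeq θ l ∧ q ∈ good (preSeq θ l) := by
  obtain ⟨n, hn⟩ := mem_iUnion.1 hq
  have hex : ∃ n, q ∈ preSeq θ n := ⟨n, hn⟩
  classical
  let n0 := Nat.find hex
  have hn0 : q ∈ preSeq θ n0 := Nat.find_spec hex
  have hN : N < n0 := by
    by_contra hle
    push_neg at hle
    exact hqN (preSeq_mono hle hn0)
  have hl : n0 = (n0 - 1) + 1 := by omega
  have hn0' : q ∈ preSeq θ ((n0 - 1) + 1) := by rw [← hl]; exact hn0
  have hql : q ∉ preSeq θ (n0 - 1) := Nat.find_min hex (by omega)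
  rcases hn0' with ⟨h1, h2⟩ | h
  · exact ⟨n0 - 1, by omega, h1, h2⟩
  · exact absurd h hql

lemma F_maps_pre {q : 𝕋} (hq : q ∈ Pre θ) (hq0 : q ∉ preSeq θ 0) : F q ∈ Pre θ := by
  obtain ⟨l, _, h1, _⟩ := level_ge hq hq0
  exact preSeq_subset_Pre l h1

variable (hθ : θ ∈ Ioo (0:ℝ) 1)
include hθ

lemma base_good0 : (aPt θ, bPt θ) ∈ goodPair (aPt θ) (bPt θ) ∧
    (bPt θ, aPt θ) ∈ goodPair (aPt θ) (bPt θ) := by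
  rw [goodPair_char (aPt_ne_bPt hθ)]
  exact ⟨Or.inl ⟨self_mem_carc, right_mem_carc⟩, Or.inl ⟨right_mem_carc, self_mem_carc⟩⟩

lemma Pre_good0 {q : 𝕋} (hq : q ∈ Pre θ) : q ∈ goodPair (aPt θ) (bPt θ) := by
  by_cases h0 : q ∈ preSeq θ 0
  · rcases h0 with h | h
    · have : q = (aPt θ, bPt θ) := h
      rw [this]; exact (base_good0 hθ).1
    · have : q = (bPt θ, aPt θ) := h
      rw [this]; exact (base_good0 hθ).2
  · obtain ⟨l, _, _, hgood⟩ := level_ge hq h0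
    exact hgood _ (base_mem_preSeq l) (by simpa using aPt_ne_bPt hθ)

lemma preSeq_offdiag : ∀ n, ∀ q ∈ preSeq θ n, q.1 ≠ q.2 := by
  intro n
  induction n with
  | zero =>
    rintro q (h | h)
    · have : q = (aPt θ, bPt θ) := h
      rw [this]; exact aPt_ne_bPt hθ
    · have : q = (bPt θ, aPt θ) := h
      rw [this]; exact (aPt_ne_bPt hθ).symm
  | succ n ih =>
    rintro q (⟨h1, _⟩ | h)
    · intro heq
      have : (F q).1 = (F q).2 := by simp only [F]; rw [heq]
      exact ih _ h1 this
    · exact ih _ h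

lemma Pre_offdiag {q : 𝕋} (hq : q ∈ Pre θ) : q.1 ≠ q.2 := by
  obtain ⟨n, hn⟩ := mem_iUnion.1 hq
  exact preSeq_offdiag hθ n q hn

omit hθ in
lemma isClosed_goodPair {x y : 𝕊} (hxy : x ≠ y) : IsClosed (goodPair x y) := by
  rw [goodPair_char hxy]
  have : {p : 𝕋 | (p.1 ∈ carc x y ∧ p.2 ∈ carc x y) ∨ (p.1 ∈ carc y x ∧ p.2 ∈ carc y x)} =
      (carc x y ×ˢ carc x y) ∪ (carc y x ×ˢ carc y x) := by
    ext p; simp [Set.mem_prod]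
  rw [this]
  exact (((isClosed_carc hxy).prod (isClosed_carc hxy)).union
    ((isClosed_carc hxy.symm).prod (isClosed_carc hxy.symm)))

lemma semicircle_of_good0 {q : 𝕋} (hq : q ∈ goodPair (aPt θ) (bPt θ)) :
    ∃ c : 𝕊, dbl c = tht θ ∧ rep (q.1 - c) ≤ 1/2 ∧ rep (q.2 - c) ≤ 1/2 := by
  rw [goodPair_char (aPt_ne_bPt hθ)] at hq
  rcases hq with ⟨h1, h2⟩ | ⟨h1, h2⟩
  · refine ⟨aPt θ, dbl_aPt hθ, ?_, ?_⟩
    · have := mem_carc.1 h1; rwa [rep_b_sub_a hθ] at this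
    · have := mem_carc.1 h2; rwa [rep_b_sub_a hθ] at this
  · refine ⟨bPt θ, dbl_bPt hθ, ?_, ?_⟩
    · have := mem_carc.1 h1; rwa [rep_a_sub_b hθ] at this
    · have := mem_carc.1 h2; rwa [rep_a_sub_b hθ] at this

lemma bPt_eq_aPt_add_half : bPt θ = aPt θ + half := by
  rw [bPt, aPt, half, ← QuotientAddGroup.mk_add]
  congr 1
  ring

lemma antipodal_good0 {q : 𝕋} (hq : q ∈ goodPair (aPt θ) (bPt θ))
    (h2 : rep (q.1 - q.2) = 1/2) :
    q = (aPt θ, bPt θ) ∨ q = (bPt θ, aPt θ) := by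
  obtain ⟨c, hc, ht1, ht2⟩ := semicircle_of_good0 hθ hq
  set t1 := rep (q.1 - c) with ht1def
  set t2 := rep (q.2 - c) with ht2def
  have hn1 : 0 ≤ t1 := rep_nonneg _
  have hn2 : 0 ≤ t2 := rep_nonneg _
  rcases lt_trichotomy t1 t2 with h | h | h
  · have := rep_diff_base' (o := c) h
    rw [h2] at this
    have e1 : t1 = 0 := by linarith
    have e2 : t2 = 1/2 := by linarith
    have hq1 : q.1 = c := by
      have h' : q.1 - c = 0 := rep_eq_zero_iff.1 (by rw [← ht1def]; exact e1)
      rwa [sub_eq_zero] at h'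
    have hq2 : q.2 = c + half := by
      have : q.2 - c = half := rep_eq_half_iff.1 (by rw [← ht2def, e2])
      rw [← this]; abel
    -- q = (c, c + half); c = a gives (a, b); c = b gives (b, a)
    have hcab : c = aPt θ ∨ c = bPt θ := by
      have hdc : dbl c = tht θ := hc
      have : (c - aPt θ) + (c - aPt θ) = 0 := by
        have : dbl c = dbl (aPt θ) := by rw [hc, dbl_aPt hθ]
        rw [dbl, dbl] at this
        rw [show (c - aPt θ) + (c - aPt θ) = (c + c) - (aPt θ + aPt θ) by abel, this, sub_self]
      rcases addSelfZero this with h' | h'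
      · left; rwa [sub_eq_zero] at h'
      · right; rw [sub_eq_iff_eq_add] at h'; rw [h', bPt_eq_aPt_add_half hθ]; abel
    rcases hcab with rfl | rfl
    · left; rw [Prod.ext_iff]; exact ⟨hq1, by rw [hq2, bPt_eq_aPt_add_half hθ]⟩
    · right; rw [Prod.ext_iff]
      refine ⟨hq1, ?_⟩
      rw [hq2, bPt_eq_aPt_add_half hθ]
      have : half + half = 0 := by
        rw [half, ← QuotientAddGroup.mk_add, show (1/2 + 1/2 : ℝ) = 1 by norm_num]
        exact_mod_cast coe_int_eq_zero 1
      rw [add_assoc, this, add_zero]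
  · exfalso
    have : q.1 = q.2 := sub_left_inj' (rep_injective (by rw [← ht1def, ← ht2def, h]))
    rw [this, sub_self, rep_zero] at h2; linarith
  · have := rep_diff_base (o := c) h
    rw [h2] at this
    have e1 : t1 = 1/2 := by linarith
    have e2 : t2 = 0 := by linarith
    have hq2 : q.2 = c := by
      have : q.2 - c = 0 := rep_eq_zero_iff.1 (by rw [← ht2def, e2])
      rwa [sub_eq_zero] at this
    have hq1 : q.1 = c + half := by
      have : q.1 - c = half := rep_eq_half_iff.1 (by rw [← ht1def, e1])
      rw [← this]; abel
    have hcab : c = aPt θ ∨ c = bPt θ := by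
      have : (c - aPt θ) + (c - aPt θ) = 0 := by
        have : dbl c = dbl (aPt θ) := by rw [hc, dbl_aPt hθ]
        rw [dbl, dbl] at this
        rw [show (c - aPt θ) + (c - aPt θ) = (c + c) - (aPt θ + aPt θ) by abel, this, sub_self]
      rcases addSelfZero this with h' | h'
      · left; rwa [sub_eq_zero] at h'
      · right; rw [sub_eq_iff_eq_add] at h'; rw [h', bPt_eq_aPt_add_half hθ]; abel
    rcases hcab with rfl | rfl
    · right; rw [Prod.ext_iff]; exact ⟨by rw [hq1, bPt_eq_aPt_add_half hθ], hq2⟩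
    · left; rw [Prod.ext_iff]
      refine ⟨?_, hq2⟩
      rw [hq1, bPt_eq_aPt_add_half hθ]
      have : half + half = 0 := by
        rw [half, ← QuotientAddGroup.mk_add, show (1/2 + 1/2 : ℝ) = 1 by norm_num]
        exact_mod_cast coe_int_eq_zero 1
      rw [add_assoc, this, add_zero]

end PreStruct


noncomputable def HS (θ : ℝ) : Set 𝕋 := {p | SepP θ p ∨ IntP θ p}

section Sep
variable {θ : ℝ}

lemma sep_iff {p : 𝕋} : SepP θ p ↔
    p.1 ≠ p.2 ∧ ∃ u ∈ PS θ, ∃ v ∈ PS θ, u ∈ arc p.1 p.2 ∧ v ∈ arc p.2 p.1 := by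
  constructor
  · rintro ⟨hne, u, hu, v, hv, huc, hvc, hval⟩
    rw [compl_pair_eq_arcs hne] at huc hvc
    rcases huc with huc | huc
    · rw [arcAt_eq_left hne huc] at hval
      rcases hvc with hvc | hvc
      · exact absurd hvc hval
      · exact ⟨hne, u, hu, v, hv, huc, hvc⟩
    · rw [arcAt_eq_right hne huc] at hval
      rcases hvc with hvc | hvc
      · exact ⟨hne, v, hv, u, hu, hvc, huc⟩
      · exact absurd hvc hval
  · rintro ⟨hne, u, hu, v, hv, huc, hvc⟩
    refine ⟨hne, u, hu, v, hv, ?_, ?_, ?_⟩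
    · rw [compl_pair_eq_arcs hne]; exact Or.inl huc
    · rw [compl_pair_eq_arcs hne]; exact Or.inr hvc
    · rw [arcAt_eq_left hne huc]
      exact fun hvmem => (Set.disjoint_left.1 (arc_disjoint hne)) hvmem hvc

lemma ne_of_arcs_mem {u v p1 p2 : 𝕊} (h1 : p1 ∈ arc v u) (h2 : p2 ∈ arc u v) : u ≠ v := by
  rintro rfl
  have ha := h1.2
  have hb := h1.1
  rw [sub_self, rep_zero] at ha
  linarith

noncomputable def Zsep (θ : ℝ) : Set 𝕋 := ⋃ u ∈ PS θ, ⋃ v ∈ PS θ, (arc v u) ×ˢ (arc u v)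

lemma mem_Zsep_iff {p : 𝕋} : p ∈ Zsep θ ↔ SepP θ p := by
  constructor
  · intro hp
    simp only [Zsep, mem_iUnion] at hp
    obtain ⟨u, hu, v, hv, hmem⟩ := hp
    obtain ⟨h1, h2⟩ := hmem
    have huv : u ≠ v := ne_of_arcs_mem h1 h2
    obtain ⟨hva, hua⟩ := cross_symm huv h2 h1
    rw [sep_iff]
    refine ⟨?_, u, hu, v, hv, hua, hva⟩
    intro heq
    rw [heq] at h1
    exact (Set.disjoint_left.1 (arc_disjoint huv.symm)) h1 h2
  · intro hp
    rw [sep_iff] at hp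
    obtain ⟨hne, u, hu, v, hv, hua, hva⟩ := hp
    obtain ⟨h2, h1⟩ := cross_symm hne hua hva
    simp only [Zsep, mem_iUnion]
    exact ⟨u, hu, v, hv, h1, h2⟩

lemma isOpen_Zsep : IsOpen (Zsep θ) := by
  apply isOpen_biUnion
  intro u _
  apply isOpen_biUnion
  intro v _
  exact isOpen_arc.prod isOpen_arc

lemma isClosed_carc_any (x y : 𝕊) : IsClosed (carc x y) := by
  rcases eq_or_ne x y with rfl | hxy
  · have : carc x x = {x} := by
      ext z
      rw [mem_carc, sub_self, rep_zero, mem_singleton_iff]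
      constructor
      · intro h
        have h0 : rep (z - x) = 0 := le_antisymm h (rep_nonneg _)
        have := rep_eq_zero_iff.1 h0
        rwa [sub_eq_zero] at this
      · rintro rfl; rw [sub_self, rep_zero]
    rw [this]; exact isClosed_singleton
  · exact isClosed_carc hxy

noncomputable def Zcl (θ : ℝ) : Set 𝕋 := ⋃ u ∈ PS θ, ⋃ v ∈ PS θ, (carc v u) ×ˢ (carc u v)

lemma isClosed_Zcl (hfin : (PS θ).Finite) : IsClosed (Zcl θ) := by
  apply Set.Finite.isClosed_biUnion hfin
  intro u _
  apply Set.Finite.isClosed_biUnion hfin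
  intro v _
  exact (isClosed_carc_any _ _).prod (isClosed_carc_any _ _)

lemma Zsep_subset_Zcl : Zsep θ ⊆ Zcl θ := by
  apply Set.iUnion₂_mono
  intro u hu
  apply Set.iUnion₂_mono
  intro v hv
  exact Set.prod_mono arc_subset_carc arc_subset_carc

noncomputable def IntSet (θ : ℝ) : Set 𝕋 := {p | IntP θ p}

lemma isClosed_IntSet (hfin : (PS θ).Finite) : IsClosed (IntSet θ) := by
  have : IntSet θ = (PS θ ×ˢ (univ : Set 𝕊)) ∪ ((univ : Set 𝕊) ×ˢ PS θ) := by
    ext p; simp [IntSet, IntP, Set.mem_prod]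
  rw [this]
  exact ((hfin.isClosed.prod isClosed_univ).union (isClosed_univ.prod hfin.isClosed))

lemma HS_eq : HS θ = Zsep θ ∪ IntSet θ := by
  ext p
  simp only [HS, mem_setOf_eq, mem_union, IntSet]
  constructor
  · rintro (h | h)
    · exact Or.inl (mem_Zsep_iff.2 h)
    · exact Or.inr h
  · rintro (h | h)
    · exact Or.inl (mem_Zsep_iff.1 h)
    · exact Or.inr h

lemma offdiag_closure_HS (hfin : (PS θ).Finite) {p : 𝕋} (hp : p ∈ closure (HS θ))
    (hne : p.1 ≠ p.2) : SepP θ p ∨ IntP θ p := by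
  rw [HS_eq] at hp
  rw [closure_union] at hp
  rcases hp with hp | hp
  · have hcl : closure (Zsep θ) ⊆ Zcl θ :=
      closure_minimal Zsep_subset_Zcl (isClosed_Zcl hfin)
    have hp' := hcl hp
    simp only [Zcl, mem_iUnion] at hp'
    obtain ⟨u, hu, v, hv, h1, h2⟩ := hp'
    rcases eq_or_ne u v with rfl | huv
    · -- carc u u = {u} : p1 = p2 = u, contradiction
      exfalso
      have e1 : rep (p.1 - u) ≤ 0 := by
        have := mem_carc.1 h1; rwa [sub_self, rep_zero] at this
      have e2 : rep (p.2 - u) ≤ 0 := by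
        have := mem_carc.1 h2; rwa [sub_self, rep_zero] at this
      have p1u : p.1 = u := by
        have := rep_eq_zero_iff.1 (le_antisymm e1 (rep_nonneg _)); rwa [sub_eq_zero] at this
      have p2u : p.2 = u := by
        have := rep_eq_zero_iff.1 (le_antisymm e2 (rep_nonneg _)); rwa [sub_eq_zero] at this
      exact hne (p1u.trans p2u.symm)
    · rw [carc_eq_arc_union huv.symm] at h1
      rw [carc_eq_arc_union huv] at h2
      rcases h1 with h1 | h1
      · rcases h2 with h2 | h2
        · -- strict: p1 ∈ arc v u, p2 ∈ arc u v : Sep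
          left
          rw [sep_iff]
          obtain ⟨hva, hua⟩ := cross_symm huv h2 h1
          exact ⟨hne, u, hu, v, hv, hua, hva⟩
        · right
          rcases h2 with h2 | h2
          · exact Or.inr (by rw [show p.2 = u from h2]; exact hu)
          · exact Or.inr (by rw [show p.2 = v from mem_singleton_iff.1 h2]; exact hv)
      · right
        rcases h1 with h1 | h1
        · exact Or.inl (by rw [show p.1 = v from h1]; exact hv)
        · exact Or.inl (by rw [show p.1 = u from mem_singleton_iff.1 h1]; exact hu)
  · have := (isClosed_IntSet hfin).closure_eq ▸ hp
    exact Or.inr this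

end Sep


lemma rep_shift_sub {x : 𝕊} {s1 s2 : ℝ} (h1 : 0 ≤ s2 - s1) (h2 : s2 - s1 < 1) :
    rep ((x + ((s2 : ℝ) : 𝕊)) - (x + ((s1 : ℝ) : 𝕊))) = s2 - s1 := by
  have : (x + ((s2 : ℝ) : 𝕊)) - (x + ((s1 : ℝ) : 𝕊)) = ((s2 - s1 : ℝ) : 𝕊) := by
    rw [QuotientAddGroup.mk_sub]; abel
  rw [this, rep_coe_of_mem ⟨h1, h2⟩]

lemma arc_subset_nhd {x : 𝕊} {ε s1 s2 : ℝ} (hε2 : ε ≤ 1/2)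
    (ha : -ε < s1) (hb : s1 < s2) (hc : s2 < ε) :
    arc (x + ((s1 : ℝ) : 𝕊)) (x + ((s2 : ℝ) : 𝕊)) ⊆ nhd ε x := by
  intro z hz
  rw [mem_arc] at hz
  rw [rep_shift_sub (by linarith) (by linarith)] at hz
  -- z = (x + s1) + d where d = rep (z - (x+s1))
  set d := rep (z - (x + ((s1 : ℝ) : 𝕊))) with hd
  refine ⟨s1 + d, ⟨by linarith [hz.1], by linarith [hz.2]⟩, ?_⟩
  show x + ((s1 + d : ℝ) : 𝕊) = z
  rw [QuotientAddGroup.mk_add]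
  have hcd : ((d : ℝ) : 𝕊) = z - (x + ((s1:ℝ) : 𝕊)) := by rw [hd, coe_rep]
  rw [hcd]
  abel

lemma eps_choice {θ : ℝ} (hfin : (PS θ).Finite) {x : 𝕊} (hx : x ∉ PS θ)
    (hne : (PS θ).Nonempty) :
    ∃ ε : ℝ, 0 < ε ∧ ε ≤ 1/2 ∧ ∀ w ∈ PS θ, ε ≤ rep (w - x) ∧ rep (w - x) ≤ 1 - ε := by
  classical
  set f : 𝕊 → ℝ := fun w => min (rep (w - x)) (1 - rep (w - x)) with hf
  obtain ⟨w0, hw0⟩ := hne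
  have hWne : hfin.toFinset.Nonempty := ⟨w0, hfin.mem_toFinset.2 hw0⟩
  set m := hfin.toFinset.inf' hWne f with hm
  have hmpos : 0 < m := by
    rw [hm, Finset.lt_inf'_iff]
    intro w hw
    have hwPS : w ∈ PS θ := hfin.mem_toFinset.1 hw
    have hwx : w ≠ x := fun h => hx (h ▸ hwPS)
    have h1 : 0 < rep (w - x) := rep_pos (sub_ne_zero_of_ne' (Ne.symm hwx))
    have h2 : rep (w - x) < 1 := rep_lt_one _
    simp only [hf, lt_min_iff]
    exact ⟨h1, by linarith⟩
  refine ⟨min (1/2) m, lt_min (by norm_num) hmpos, min_le_left _ _, ?_⟩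
  intro w hw
  have hle : m ≤ f w := Finset.inf'_le f (hfin.mem_toFinset.2 hw)
  simp only [hf, le_min_iff] at hle
  constructor
  · exact le_trans (min_le_right (1/2) m) hle.1
  · have := le_trans (min_le_right (1/2) m) hle.2
    linarith

lemma PS_nonempty {θ : ℝ} (hθ : θ ∈ Ioo (0:ℝ) 1) : (PS θ).Nonempty := ⟨tht θ, tht_mem_PS hθ⟩

/-- the key pigeonhole: a diagonal point in the closure of `HS` must lie on `PS`. -/
lemma diag_closure_HS {θ : ℝ} (hθ : θ ∈ Ioo (0:ℝ) 1) (hfin : (PS θ).Finite) {x : 𝕊}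
    (hx : (x, x) ∈ closure (HS θ)) : x ∈ PS θ := by
  by_contra hxPS
  obtain ⟨ε, hε0, hε2, hεsep⟩ := eps_choice hfin hxPS (PS_nonempty hθ)
  have hnx : x ∈ nhd ε x := self_mem_nhd hε0 x
  have hN : (nhd ε x ×ˢ nhd ε x) ∈ 𝓝 ((x, x) : 𝕋) :=
    ((isOpen_nhd.prod isOpen_nhd).mem_nhds ⟨hnx, hnx⟩)
  obtain ⟨q, hq'⟩ := mem_closure_iff_nhds.1 hx _ hN
  have hqN := hq'.1
  have hqHS := hq'.2
  have notin : ∀ w ∈ PS θ, w ∉ nhd ε x := by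
    intro w hw hwn
    rcases (mem_nhd_iff hε0 hε2).1 hwn with h | h
    · exact absurd h (not_lt.2 (hεsep w hw).1)
    · exact absurd h (not_lt.2 (by linarith [(hεsep w hw).2]))
  rcases hqHS with hsep | hint
  · -- separating leaf inside small nbhd: one arc is inside the nbhd
    rw [sep_iff] at hsep
    obtain ⟨hne, u, hu, v, hv, hua, hva⟩ := hsep
    obtain ⟨s1, hs1, hq1⟩ : ∃ s, s ∈ Ioo (-ε) ε ∧ q.1 = x + ((s : ℝ) : 𝕊) := by
      obtain ⟨s, hs, he⟩ := hqN.1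
      exact ⟨s, hs, he.symm⟩
    obtain ⟨s2, hs2, hq2⟩ : ∃ s, s ∈ Ioo (-ε) ε ∧ q.2 = x + ((s : ℝ) : 𝕊) := by
      obtain ⟨s, hs, he⟩ := hqN.2
      exact ⟨s, hs, he.symm⟩
    have hs12 : s1 ≠ s2 := by
      rintro rfl
      exact hne (by rw [hq1, hq2])
    rcases lt_or_gt_of_ne hs12 with hlt | hgt
    · have harc : arc q.1 q.2 ⊆ nhd ε x := by
        rw [hq1, hq2]; exact arc_subset_nhd hε2 hs1.1 hlt hs2.2
      exact notin u hu (harc hua)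
    · have harc : arc q.2 q.1 ⊆ nhd ε x := by
        rw [hq1, hq2]; exact arc_subset_nhd hε2 hs2.1 hgt hs1.2
      exact notin v hv (harc hva)
  · rcases hint with h | h
    · exact notin q.1 h hqN.1
    · exact notin q.2 h hqN.2


lemma rep_dbl_small {v : 𝕊} (h : rep v < 1/2) : rep (v + v) = 2 * rep v := by
  rcases rep_add_cases v v with h1 | h1
  · rw [h1]; ring
  · exfalso; have := rep_nonneg (v + v); rw [h1] at this; linarith

lemma dbl_sub_dbl (z w : 𝕊) : dbl w - dbl z = (w - z) + (w - z) := by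
  rw [dbl, dbl]; abel

lemma dbl_shift (z c : 𝕊) : dbl z - dbl c = (z - c) + (z - c) := dbl_sub_dbl c z

section Push
variable {θ : ℝ} (hθ : θ ∈ Ioo (0:ℝ) 1)
include hθ

lemma dbl_eq_tht_of_edge {c z : 𝕊} (hc : dbl c = tht θ)
    (h : rep (z - c) = 0 ∨ rep (z - c) = 1/2) : dbl z = tht θ := by
  have key : dbl z - dbl c = (z - c) + (z - c) := dbl_shift z c
  rcases h with h | h
  · have : z - c = 0 := rep_eq_zero_iff.1 h
    have : dbl z - dbl c = 0 := by rw [key, this]; abel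
    rw [sub_eq_zero] at this; rw [this, hc]
  · have hzc : z - c = half := rep_eq_half_iff.1 h
    have hhh : half + half = 0 := by
      rw [half, ← QuotientAddGroup.mk_add, show (1/2 + 1/2 : ℝ) = 1 by norm_num]
      exact_mod_cast coe_int_eq_zero 1
    have : dbl z - dbl c = 0 := by rw [key, hzc, hhh]
    rw [sub_eq_zero] at this; rw [this, hc]

omit hθ in
lemma push_branch {c z w m : 𝕊}
    (hz0 : 0 < rep (z - c)) (hw : rep (w - c) < 1/2) (hzw : rep (z - c) < rep (w - c))
    (hm : m ∈ arc z w) :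
    dbl m ∈ arc (dbl z) (dbl w) ∧ dbl c ∈ arc (dbl w) (dbl z) := by
  set tz := rep (z - c) with htz
  set tw := rep (w - c) with htw
  have hmz0 : 0 < rep (m - z) := hm.1
  have hmzw : rep (m - z) < rep (w - z) := hm.2
  have hwz : rep (w - z) = tw - tz := rep_diff_base hzw
  have hrep_dblwz : rep (dbl w - dbl z) = 2 * (tw - tz) := by
    rw [dbl_sub_dbl, rep_dbl_small (by rw [hwz]; linarith), hwz]
  have hrep_dblmz : rep (dbl m - dbl z) = 2 * rep (m - z) := by
    rw [dbl_sub_dbl, rep_dbl_small (by rw [hwz] at hmzw; linarith)]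
  constructor
  · rw [mem_arc, hrep_dblmz, hrep_dblwz]
    rw [hwz] at hmzw
    constructor <;> linarith
  · -- dbl c ∈ arc (dbl w) (dbl z)
    have hww0 : (w - c) + (w - c) ≠ 0 := by
      intro hh
      have := rep_dbl_small (v := w - c) (by linarith)
      rw [hh, rep_zero] at this
      linarith
    have h1 : rep (dbl c - dbl w) = 1 - 2 * tw := by
      rw [show dbl c - dbl w = -((w - c) + (w - c)) by rw [dbl, dbl]; abel,
        rep_neg hww0, rep_dbl_small (by linarith)]
    have hdblne : dbl z ≠ dbl w := by
      intro hh
      rw [hh, sub_self, rep_zero] at hrep_dblwz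
      linarith
    have h2 : rep (dbl z - dbl w) = 1 - 2 * (tw - tz) := by
      rw [rep_rev hdblne, hrep_dblwz]
    rw [mem_arc, h1, h2]
    constructor <;> linarith

lemma push_sepint {p : 𝕋} (hgood : p ∈ goodPair (aPt θ) (bPt θ))
    (hne : p.1 ≠ p.2) (h : SepP θ p ∨ IntP θ p) : SepP θ (F p) ∨ IntP θ (F p) := by
  have hF1 : (F p).1 = dbl p.1 := rfl
  have hF2 : (F p).2 = dbl p.2 := rfl
  rcases h with hsep | hint
  swap
  · right
    rcases hint with h | h
    · exact Or.inl (by rw [hF1]; exact dbl_mem_PS hθ h)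
    · exact Or.inr (by rw [hF2]; exact dbl_mem_PS hθ h)
  obtain ⟨c, hc, ht1, ht2⟩ := semicircle_of_good0 hθ hgood
  set t1 := rep (p.1 - c) with ht1d
  set t2 := rep (p.2 - c) with ht2d
  -- edge cases
  by_cases he1 : t1 = 0 ∨ t1 = 1/2
  · right; left; rw [hF1, dbl_eq_tht_of_edge hθ hc he1]; exact tht_mem_PS hθ
  by_cases he2 : t2 = 0 ∨ t2 = 1/2
  · right; right; rw [hF2, dbl_eq_tht_of_edge hθ hc he2]; exact tht_mem_PS hθ
  push_neg at he1 he2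
  have h10 : 0 < t1 := lt_of_le_of_ne (rep_nonneg _) (Ne.symm he1.1)
  have h12 : t1 < 1/2 := lt_of_le_of_ne ht1 he1.2
  have h20 : 0 < t2 := lt_of_le_of_ne (rep_nonneg _) (Ne.symm he2.1)
  have h22 : t2 < 1/2 := lt_of_le_of_ne ht2 he2.2
  obtain ⟨-, u, hu, v, hv, hua, hva⟩ := sep_iff.1 hsep
  have htne : t1 ≠ t2 := by
    intro hh
    exact hne (sub_left_inj' (rep_injective (by rw [← ht1d, ← ht2d, hh])))
  left
  rcases lt_or_gt_of_ne htne with hlt | hgt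
  · obtain ⟨hm1, hm2⟩ := push_branch h10 h22 hlt hua
    rw [sep_iff]
    refine ⟨?_, dbl u, dbl_mem_PS hθ hu, tht θ, tht_mem_PS hθ, ?_, ?_⟩
    · intro hh
      rw [hF1, hF2] at hh
      rw [hh] at hm1
      have h2' := hm1.2
      rw [sub_self, rep_zero] at h2'
      linarith [hm1.1]
    · rw [hF1, hF2]; exact hm1
    · rw [hF1, hF2, ← hc]; exact hm2
  · obtain ⟨hm1, hm2⟩ := push_branch h20 h12 hgt hva
    rw [sep_iff]
    refine ⟨?_, tht θ, tht_mem_PS hθ, dbl v, dbl_mem_PS hθ hv, ?_, ?_⟩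
    · intro hh
      rw [hF1, hF2] at hh
      rw [← hh] at hm1
      have h2' := hm1.2
      rw [sub_self, rep_zero] at h2'
      linarith [hm1.1]
    · rw [hF1, hF2, ← hc]; exact hm2
    · rw [hF1, hF2]; exact hm1

end Push


section Main
variable {θ : ℝ}

lemma acc_mem_closure {X : Type*} [TopologicalSpace X] {x : X} {S : Set X}
    (h : AccPt x (𝓟 S)) : x ∈ closure S := by
  rw [mem_closure_iff_nhds]
  intro t ht
  obtain ⟨y, hy, -⟩ := acc_nhds h t ht
  exact ⟨y, hy⟩

lemma Sset_subset_Pre : Sset θ ⊆ Pre θ := fun p hp => hp.1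
lemma Sset_subset_HS : Sset θ ⊆ HS θ := fun p hp => hp.2
lemma Xset_subset_HS : Xset θ ⊆ HS θ := fun p hp => hp.2

lemma Pdiag_subset_HS : Pdiag θ ⊆ HS θ := fun p hp => Or.inr (Or.inl hp.2)

lemma Pdiag_finite (hrat : ∃ q : ℚ, (q : ℝ) = θ) : (Pdiag θ).Finite := by
  have : Pdiag θ ⊆ (fun α : 𝕊 => ((α, α) : 𝕋)) '' PS θ := by
    rintro ⟨p1, p2⟩ ⟨h1, h2⟩
    refine ⟨p1, h2, ?_⟩
    show ((p1, p1) : 𝕋) = (p1, p2)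
    rw [Prod.ext_iff]
    exact ⟨rfl, h1⟩
  exact ((PS_finite hrat).image _).subset this

variable (hθ : θ ∈ Ioo (0:ℝ) 1) (hrat : ∃ q : ℚ, (q : ℝ) = θ)
include hθ hrat

lemma cluster_subset_Hset : clusterS θ ⊆ Hset θ := by
  intro p hp
  have hcl : p ∈ closure (HS θ) :=
    closure_mono (Sset_subset_HS) (acc_mem_closure hp)
  rcases eq_or_ne p.1 p.2 with heq | hne
  · right
    refine ⟨heq, ?_⟩
    have hxx : ((p.1, p.1) : 𝕋) ∈ closure (HS θ) := by
      have : p = (p.1, p.1) := by rw [Prod.ext_iff]; exact ⟨rfl, heq.symm⟩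
      rwa [← this]
    exact diag_closure_HS hθ (PS_finite hrat) hxx
  · left
    refine ⟨⟨acc_mono' Sset_subset_Pre hp, hne⟩, offdiag_closure_HS (PS_finite hrat) hcl hne⟩

lemma isClosed_Hset : IsClosed (Hset θ) := by
  rw [← closure_subset_iff_isClosed]
  intro p hp
  rw [Hset, closure_union] at hp
  rcases hp with hp | hp
  · have hsub : Xset θ ⊆ {q : 𝕋 | AccPt q (𝓟 (Pre θ))} ∩ HS θ := by
      rintro q ⟨⟨hacc, _⟩, hSI⟩
      exact ⟨hacc, hSI⟩
    have hcl : p ∈ {q : 𝕋 | AccPt q (𝓟 (Pre θ))} ∩ closure (HS θ) := by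
      have h1 := closure_mono hsub hp
      have : closure ({q : 𝕋 | AccPt q (𝓟 (Pre θ))} ∩ HS θ) ⊆
          {q : 𝕋 | AccPt q (𝓟 (Pre θ))} ∩ closure (HS θ) := by
        apply subset_inter
        · exact subset_trans (closure_mono inter_subset_left)
            (by rw [(isClosed_acc (Pre θ)).closure_eq])
        · exact subset_trans (closure_mono inter_subset_right) subset_rfl
      exact this h1
    rcases eq_or_ne p.1 p.2 with heq | hne
    · right
      refine ⟨heq, ?_⟩
      have hxx : ((p.1, p.1) : 𝕋) ∈ closure (HS θ) := by
        have : p = (p.1, p.1) := by rw [Prod.ext_iff]; exact ⟨rfl, heq.symm⟩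
        rw [← this]; exact hcl.2
      exact diag_closure_HS hθ (PS_finite hrat) hxx
    · left
      exact ⟨⟨hcl.1, hne⟩, offdiag_closure_HS (PS_finite hrat) hcl.2 hne⟩
  · rw [((Pdiag_finite hrat).isClosed).closure_eq] at hp
    exact Or.inr hp

lemma isCompact_Hset : IsCompact (Hset θ) := (isClosed_Hset hθ hrat).isCompact

omit hθ hrat in
lemma isCompact_clusterS : IsCompact (clusterS θ) := (isClosed_acc (Sset θ)).isCompact

omit hrat in
lemma mapsTo_Pdiag : MapsTo F (Pdiag θ) (Pdiag θ) := by
  rintro ⟨p1, p2⟩ ⟨h1, h2⟩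
  simp only [Pdiag, F, mem_setOf_eq] at *
  subst h1
  exact ⟨rfl, dbl_mem_PS hθ h2⟩

omit hθ hrat in
lemma preSeq_zero_finite : (preSeq θ 0).Finite := by
  show ({((aPt θ : 𝕊), (bPt θ : 𝕊)), ((bPt θ : 𝕊), (aPt θ : 𝕊))} : Set 𝕋).Finite
  exact (Set.finite_singleton _).insert _

omit hrat in
lemma acc_Pre_good0 {p : 𝕋} (hacc : AccPt p (𝓟 (Pre θ))) :
    p ∈ goodPair (aPt θ) (bPt θ) := by
  have h1 : p ∈ closure (Pre θ) := acc_mem_closure hacc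
  have h2 : closure (Pre θ) ⊆ goodPair (aPt θ) (bPt θ) :=
    closure_minimal (fun q hq => Pre_good0 hθ hq) (isClosed_goodPair (aPt_ne_bPt hθ))
  exact h2 h1

omit hrat in
lemma F_acc_Pre {p : 𝕋} (hacc : AccPt p (𝓟 (Pre θ))) : AccPt (F p) (𝓟 (Pre θ)) := by
  have h1 : AccPt p (𝓟 (Pre θ \ preSeq θ 0)) := acc_diff_finite preSeq_zero_finite hacc
  have h2 := acc_image continuous_F (F_fiber_finite (F p)) h1
  apply acc_mono' _ h2
  rintro q ⟨r, ⟨hr1, hr2⟩, rfl⟩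
  exact F_maps_pre hr1 hr2

omit hrat in
lemma mapsTo_Xset : MapsTo F (Xset θ) (Hset θ) := by
  rintro p ⟨⟨hacc, hne⟩, hSI⟩
  have hgood : p ∈ goodPair (aPt θ) (bPt θ) := acc_Pre_good0 hθ hacc
  rcases eq_or_ne (F p).1 (F p).2 with heq | hFne
  · -- p is the major leaf; F p = (tht, tht) ∈ Pdiag
    right
    have hz : (p.1 - p.2) + (p.1 - p.2) = 0 := by
      have : (F p).1 - (F p).2 = (p.1 - p.2) + (p.1 - p.2) := by
        show (p.1 + p.1) - (p.2 + p.2) = _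
        abel
      rw [heq, sub_self] at this
      exact this.symm
    rcases addSelfZero hz with h | h
    · exact absurd (by rwa [sub_eq_zero] at h) hne
    · have hrep : rep (p.1 - p.2) = 1/2 := by rw [h, rep_half]
      rcases antipodal_good0 hθ hgood hrep with rfl | rfl
      · refine ⟨heq, ?_⟩
        show dbl (aPt θ) ∈ PS θ
        rw [dbl_aPt hθ]; exact tht_mem_PS hθ
      · refine ⟨heq, ?_⟩
        show dbl (bPt θ) ∈ PS θ
        rw [dbl_bPt hθ]; exact tht_mem_PS hθ
  · left
    exact ⟨⟨F_acc_Pre hθ hacc, hFne⟩, push_sepint hθ hgood hne hSI⟩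

omit hrat in
lemma mapsTo_Hset : MapsTo F (Hset θ) (Hset θ) := by
  rintro p (hp | hp)
  · exact mapsTo_Xset hθ hp
  · exact Or.inr (mapsTo_Pdiag hθ hp)

omit hrat in
lemma F_Sset_step {q : 𝕋} (hq : q ∈ Sset θ) (hq0 : q ∉ preSeq θ 0) : F q ∈ Sset θ := by
  obtain ⟨hqPre, hqSI⟩ := hq
  refine ⟨F_maps_pre hqPre hq0, ?_⟩
  exact push_sepint hθ (Pre_good0 hθ hqPre) (Pre_offdiag hθ hqPre) hqSI

omit hrat in
lemma mapsTo_clusterS : MapsTo F (clusterS θ) (clusterS θ) := by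
  intro p hp
  have h1 : AccPt p (𝓟 (Sset θ \ preSeq θ 0)) := acc_diff_finite preSeq_zero_finite hp
  have h2 := acc_image continuous_F (F_fiber_finite (F p)) h1
  apply acc_mono' _ h2
  rintro q ⟨r, ⟨hr1, hr2⟩, rfl⟩
  exact F_Sset_step hθ hr1 hr2

omit hθ hrat in
lemma sep_mem_clusterS {p : 𝕋} (hacc : AccPt p (𝓟 (Pre θ))) (hsep : SepP θ p) :
    p ∈ clusterS θ := by
  have hmem : p ∈ Zsep θ := mem_Zsep_iff.2 hsep
  have h1 : AccPt p (𝓟 (Pre θ ∩ Zsep θ)) := acc_inter_open isOpen_Zsep hmem hacc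
  apply acc_mono' _ h1
  rintro q ⟨hq1, hq2⟩
  exact ⟨hq1, Or.inl (mem_Zsep_iff.1 hq2)⟩

end Main


section Swap
variable {θ : ℝ}

lemma goodPair_swap_mem {x y : 𝕊} {p : 𝕋} : p ∈ goodPair x y ↔ p.swap ∈ goodPair x y := by
  constructor
  · rintro ⟨z, hz, h1, h2⟩; exact ⟨z, hz, h2, h1⟩
  · rintro ⟨z, hz, h1, h2⟩; exact ⟨z, hz, h2, h1⟩

lemma F_swap (p : 𝕋) : F p.swap = (F p).swap := rfl

lemma good_swap_mem {S : Set 𝕋} {p : 𝕋} : p ∈ good S ↔ p.swap ∈ good S := by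
  constructor
  · intro h q hq hne
    exact goodPair_swap_mem.1 (h q hq hne)
  · intro h q hq hne
    exact goodPair_swap_mem.2 (h q hq hne)

lemma swap_mem_preSeq (n : ℕ) : ∀ {p : 𝕋}, p ∈ preSeq θ n → p.swap ∈ preSeq θ n := by
  induction n with
  | zero =>
    intro p hp
    rcases hp with h | h
    · rw [show p = ((((θ / 2 : ℝ) : 𝕊)), (((θ + 1) / 2 : ℝ) : 𝕊)) from h]
      right; rfl
    · rw [show p = (((((θ + 1) / 2 : ℝ)) : 𝕊), ((θ / 2 : ℝ) : 𝕊)) from mem_singleton_iff.1 h]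
      left; rfl
  | succ n ih =>
    intro p hp
    rcases hp with ⟨h1, h2⟩ | h
    · left
      refine ⟨?_, good_swap_mem.1 h2⟩
      show F p.swap ∈ preSeq θ n
      rw [F_swap]
      exact ih h1
    · exact Or.inr (ih h)

lemma swap_mem_Pre {p : 𝕋} (hp : p ∈ Pre θ) : p.swap ∈ Pre θ := by
  obtain ⟨n, hn⟩ := mem_iUnion.1 hp
  exact mem_iUnion.2 ⟨n, swap_mem_preSeq n hn⟩

lemma SepP_comm {x y : 𝕊} : SepP θ (x, y) ↔ SepP θ (y, x) := by
  unfold SepP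
  have harc : ∀ u : 𝕊, arcAt y x u = arcAt x y u := by
    intro u; unfold arcAt; rw [pair_comm y x]
  have hset : ({y, x} : Set 𝕊) = {x, y} := pair_comm y x
  constructor
  · rintro ⟨hne, u, hu, v, hv, huc, hvc, hval⟩
    exact ⟨hne.symm, u, hu, v, hv, by rwa [show (((y,x) : 𝕋).1) = y from rfl,
      show (((y,x) : 𝕋).2) = x from rfl, hset], by rwa [hset], by rwa [harc]⟩
  · rintro ⟨hne, u, hu, v, hv, huc, hvc, hval⟩
    exact ⟨hne.symm, u, hu, v, hv, by rwa [← hset], by rwa [← hset], by rwa [← harc]⟩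

lemma SepP_swap {p : 𝕋} : SepP θ p ↔ SepP θ p.swap := by
  have h := SepP_comm (θ := θ) (x := p.1) (y := p.2)
  exact h

lemma IntP_swap {p : 𝕋} : IntP θ p ↔ IntP θ p.swap := by
  unfold IntP
  exact Or.comm

lemma swap_mem_Sset {p : 𝕋} (hp : p ∈ Sset θ) : p.swap ∈ Sset θ := by
  refine ⟨swap_mem_Pre hp.1, ?_⟩
  rcases hp.2 with h | h
  · exact Or.inl (SepP_swap.1 h)
  · exact Or.inr (IntP_swap.1 h)

lemma acc_swap {p : 𝕋} {S : Set 𝕋} (hS : ∀ q ∈ S, Prod.swap q ∈ S)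
    (h : AccPt p (𝓟 S)) : AccPt p.swap (𝓟 S) := by
  have hfiber : ((Prod.swap : 𝕋 → 𝕋) ⁻¹' {p.swap}).Finite := by
    apply Set.Finite.subset (Set.finite_singleton p)
    intro q hq
    simp only [mem_preimage, mem_singleton_iff] at hq
    have := congrArg Prod.swap hq
    rwa [Prod.swap_swap, Prod.swap_swap] at this
  have := acc_image (continuous_swap) hfiber h
  apply acc_mono' _ this
  rintro q ⟨r, hr, rfl⟩
  exact hS r hr

lemma swap_mem_clusterS {p : 𝕋} (hp : p ∈ clusterS θ) : p.swap ∈ clusterS θ :=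
  acc_swap (fun q hq => swap_mem_Sset hq) hp

lemma swap_mem_XmC {p : 𝕋} (hp : p ∈ Xset θ \ clusterS θ) :
    p.swap ∈ Xset θ \ clusterS θ := by
  obtain ⟨⟨⟨hacc, hne⟩, hSI⟩, hnc⟩ := hp
  refine ⟨⟨⟨acc_swap (fun q hq => swap_mem_Pre hq) hacc, hne.symm⟩, ?_⟩, ?_⟩
  · rcases hSI with h | h
    · exact Or.inl (SepP_swap.1 h)
    · exact Or.inr (IntP_swap.1 h)
  · intro hsw
    exact hnc (by simpa [Prod.swap_swap] using swap_mem_clusterS hsw)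

end Swap

section FinAux
variable {θ : ℝ}

lemma preSeq_finite (n : ℕ) : (preSeq θ n).Finite := by
  induction n with
  | zero => exact preSeq_zero_finite
  | succ n ih =>
    apply Set.Finite.union _ ih
    apply Set.Finite.inter_of_left
    have : F ⁻¹' preSeq θ n = ⋃ p ∈ preSeq θ n, F ⁻¹' {p} := by
      ext q; simp [mem_preimage, mem_iUnion]
    rw [this]
    exact Set.Finite.biUnion ih (fun p _ => F_fiber_finite p)

lemma not_sep_cases {p : 𝕋} (hne : p.1 ≠ p.2) (hns : ¬ SepP θ p) :
    (∀ w ∈ PS θ, w ∉ arc p.1 p.2) ∨ (∀ w ∈ PS θ, w ∉ arc p.2 p.1) := by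
  by_contra h
  push_neg at h
  obtain ⟨⟨u, hu, hua⟩, ⟨v, hv, hva⟩⟩ := h
  exact hns (sep_iff.2 ⟨hne, u, hu, v, hv, hua, hva⟩)

end FinAux


section Core
variable {θ : ℝ} (hθ : θ ∈ Ioo (0:ℝ) 1)

omit hθ in
lemma coord_near {u y z : 𝕊} {ε : ℝ} (hε : 0 < ε) (hε2 : ε ≤ 1/2)
    (hgt : ε < rep (y - u)) (hlt : rep (y - u) + ε < 1)
    (hz : z ∈ nhd ε y) :
    rep (y - u) - ε < rep (z - u) ∧ rep (z - u) < rep (y - u) + ε := by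
  set c := rep (y - u) with hc
  set d := rep (z - y) with hd
  have hkey : z - u = (z - y) + (y - u) := by abel
  have hcases : rep (z - u) = d + c ∨ rep (z - u) = d + c - 1 := by
    rcases rep_add_cases (z - y) (y - u) with h | h <;> rw [← hkey] at h
    · left; exact h
    · right; exact h
  have hd01 : 0 ≤ d := rep_nonneg _
  have hd1 : d < 1 := rep_lt_one _
  rcases (mem_nhd_iff hε hε2).1 hz with h | h
  · -- d < ε
    rcases hcases with hh | hh
    · rw [hh]; constructor <;> linarith
    · exfalso; have := rep_nonneg (z - u); rw [hh] at this; linarith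
  · -- d > 1 - ε
    rcases hcases with hh | hh
    · exfalso; have := rep_lt_one (z - u); rw [hh] at this; linarith
    · rw [hh]; constructor <;> linarith

include hθ in
lemma sep_uw {u w : 𝕊} (hu : u ∈ PS θ) (hw : w ∈ PS θ) {q : 𝕋} (hqPre : q ∈ Pre θ)
    (h0 : 0 < rep (q.2 - u)) (hd : rep (q.2 - u) < rep (q.1 - u))
    (htw1 : rep (q.2 - u) < rep (w - u)) (htw2 : rep (w - u) < rep (q.1 - u)) :
    q ∈ Sset θ := by
  have hq1u : q.1 - u ≠ 0 := by
    intro hh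
    rw [hh, rep_zero] at hd
    linarith
  have hmem1 : u ∈ arc q.1 q.2 := by
    rw [mem_arc, show u - q.1 = -(q.1 - u) by abel, rep_neg hq1u, rep_diff_base' hd]
    have := rep_lt_one (q.1 - u)
    constructor <;> linarith
  have hmem2 : w ∈ arc q.2 q.1 := by
    rw [mem_arc, rep_diff_base htw1, rep_diff_base hd]
    constructor <;> linarith
  exact ⟨hqPre, Or.inl (sep_iff.2 ⟨Pre_offdiag hθ hqPre, u, hu, w, hw, hmem1, hmem2⟩)⟩

omit hθ in
lemma pick_near {p : 𝕋} {A : Set 𝕋} (hA : A.Finite) (hacc : AccPt p (𝓟 (Pre θ)))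
    (hnc : p ∉ clusterS θ) {ε : ℝ} (hε : 0 < ε) :
    ∃ q : 𝕋, q ∈ Pre θ ∧ q ∉ A ∧ q ∉ Sset θ ∧ q ≠ p ∧
      q.1 ∈ nhd ε p.1 ∧ q.2 ∈ nhd ε p.2 := by
  have hnc' : ∃ U ∈ 𝓝 p, ∀ z ∈ U ∩ Sset θ, z = p := by
    have := hnc
    simp only [clusterS, mem_setOf_eq, accPt_iff_nhds] at this
    push_neg at this
    obtain ⟨U, hU, hprop⟩ := this
    exact ⟨U, hU, fun z hz => by
      rcases eq_or_ne z p with h | h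
      · exact h
      · exact absurd (hprop z hz) (by simp [h])⟩
  obtain ⟨U, hU, hprop⟩ := hnc'
  have hacc' : AccPt p (𝓟 (Pre θ \ A)) := acc_diff_finite hA hacc
  have hW : (nhd ε p.1 ×ˢ nhd ε p.2) ∩ U ∈ 𝓝 p := by
    refine inter_mem ?_ hU
    exact (isOpen_nhd.prod isOpen_nhd).mem_nhds ⟨self_mem_nhd hε _, self_mem_nhd hε _⟩
  obtain ⟨q, ⟨⟨hqn, hqU⟩, hqPre, hqA⟩, hqp⟩ := acc_nhds hacc' _ hW
  refine ⟨q, hqPre, hqA, ?_, hqp, hqn.1, hqn.2⟩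
  intro hqS
  exact hqp (hprop q ⟨hqU, hqS⟩)

include hθ in
/-- Key uniqueness: two leaves out of the cluster set, sharing the marked endpoint `u ∈ PS`,
with the (larger) second one having its positively-oriented arc free of `PS`, cannot coexist. -/
lemma core_plus {u y y' : 𝕊} (hu : u ∈ PS θ)
    (hyPS : y ∉ PS θ) (hy'PS : y' ∉ PS θ)
    (hyu : y ≠ u) (hy'u : y' ≠ u)
    (horder : rep (y - u) < rep (y' - u))
    (hfree' : ∀ w ∈ PS θ, w ∉ arc u y')
    (haccy : AccPt ((u, y) : 𝕋) (𝓟 (Pre θ)))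
    (haccy' : AccPt ((u, y') : 𝕋) (𝓟 (Pre θ)))
    (hncy : ((u, y) : 𝕋) ∉ clusterS θ) (hncy' : ((u, y') : 𝕋) ∉ clusterS θ) : False := by
  set ty := rep (y - u) with hty
  set c' := rep (y' - u) with hc'
  have hty0 : 0 < ty := rep_pos (sub_ne_zero_of_ne' (Ne.symm hyu))
  have hc'1 : c' < 1 := rep_lt_one _
  -- the witness w on the other side of y'
  obtain ⟨w, hw, hwu⟩ := PS_pair hθ u hu
  set tw := rep (w - u) with htw
  have htw0 : 0 < tw := rep_pos (sub_ne_zero_of_ne' (fun hh => hwu hh.symm))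
  have htwc' : c' < tw := by
    have hnotarc := hfree' w hw
    rw [mem_arc] at hnotarc
    push_neg at hnotarc
    have h1 := hnotarc htw0
    rcases lt_or_eq_of_le h1 with h | h
    · exact h
    · exfalso
      have hyw : y' = w := sub_left_inj' (rep_injective h)
      exact hy'PS (by rw [hyw]; exact hw)
  have htw1 : tw < 1 := rep_lt_one _
  -- choose δ
  set δ := min (ty/3) (min ((c' - ty)/3) (min ((tw - c')/3) ((1 - tw)/2))) with hδdef
  have hδ0 : 0 < δ := by
    apply lt_min (by linarith)
    apply lt_min (by linarith)
    exact lt_min (by linarith) (by linarith)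
  have hh1 : δ ≤ ty/3 := by rw [hδdef]; exact min_le_left _ _
  have hh2 : δ ≤ (c' - ty)/3 := by
    rw [hδdef]; exact le_trans (min_le_right _ _) (min_le_left _ _)
  have hh3 : δ ≤ (tw - c')/3 := by
    rw [hδdef]
    exact le_trans (min_le_right _ _) (le_trans (min_le_right _ _) (min_le_left _ _))
  have hh4 : δ ≤ (1 - tw)/2 := by
    rw [hδdef]
    exact le_trans (min_le_right _ _) (le_trans (min_le_right _ _) (min_le_right _ _))
  have hδ1 : 3 * δ ≤ ty := by linarith
  have hδ2 : 3 * δ ≤ c' - ty := by linarith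
  have hδ3 : 3 * δ ≤ tw - c' := by linarith
  have hδ4 : 2 * δ ≤ 1 - tw := by linarith
  have hδhalf : δ ≤ 1/2 := by
    have := rep_lt_one (y - u)
    linarith
  -- pick q near (u, y')
  obtain ⟨q, hqPre, -, hqS, hqne, hq1, hq2⟩ :=
    pick_near (finite_empty) haccy' hncy' hδ0
  have htq2 : c' - δ < rep (q.2 - u) ∧ rep (q.2 - u) < c' + δ :=
    coord_near hδ0 hδhalf (by rw [← hc']; linarith) (by rw [← hc']; linarith) hq2
  set tq2 := rep (q.2 - u) with htq2def
  set d1 := rep (q.1 - u) with hd1def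
  have hq1cases : d1 < δ ∨ 1 - δ < d1 := (mem_nhd_iff hδ0 hδhalf).1 hq1
  have hd1ne0 : d1 ≠ 0 := by
    intro h0
    apply hqS
    have : q.1 = u := by
      have := rep_eq_zero_iff.1 (by rw [← hd1def]; exact h0)
      rwa [sub_eq_zero] at this
    exact ⟨hqPre, Or.inr (Or.inl (this ▸ hu))⟩
  have hd1small : d1 < δ := by
    rcases hq1cases with h | h
    · exact h
    · exfalso
      apply hqS
      refine sep_uw hθ hu hw hqPre ?_ ?_ ?_ ?_
      · rw [← htq2def]; linarith
      · rw [← htq2def, ← hd1def]; linarith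
      · rw [← htq2def, ← htw]; linarith
      · rw [← htw, ← hd1def]; linarith
  have hd10 : 0 < d1 := lt_of_le_of_ne (rep_nonneg _) (Ne.symm hd1ne0)
  -- level of q
  obtain ⟨M, hqM⟩ := mem_iUnion.1 hqPre
  -- pick r near (u, y) at higher level
  set ε₂ := min δ d1 with hε₂def
  have hε₂0 : 0 < ε₂ := lt_min hδ0 hd10
  have hε₂δ : ε₂ ≤ δ := min_le_left _ _
  have hε₂d1 : ε₂ ≤ d1 := min_le_right _ _
  have hε₂half : ε₂ ≤ 1/2 := le_trans hε₂δ hδhalf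
  obtain ⟨r, hrPre, hrM, hrS, hrne, hr1, hr2⟩ :=
    pick_near (preSeq_finite M) haccy hncy hε₂0
  have htr2 : ty - ε₂ < rep (r.2 - u) ∧ rep (r.2 - u) < ty + ε₂ :=
    coord_near hε₂0 hε₂half (by rw [← hty]; linarith) (by rw [← hty]; linarith) hr2
  set tr2 := rep (r.2 - u) with htr2def
  set e1 := rep (r.1 - u) with he1def
  have hr1cases : e1 < ε₂ ∨ 1 - ε₂ < e1 := (mem_nhd_iff hε₂0 hε₂half).1 hr1
  have he1ne0 : e1 ≠ 0 := by
    intro h0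
    apply hrS
    have : r.1 = u := by
      have := rep_eq_zero_iff.1 (by rw [← he1def]; exact h0)
      rwa [sub_eq_zero] at this
    exact ⟨hrPre, Or.inr (Or.inl (this ▸ hu))⟩
  have he1small : e1 < ε₂ := by
    rcases hr1cases with h | h
    · exact h
    · exfalso
      apply hrS
      refine sep_uw hθ hu hw hrPre ?_ ?_ ?_ ?_
      · rw [← htr2def]; linarith
      · rw [← htr2def, ← he1def]; linarith
      · rw [← htr2def, ← htw]; linarith
      · rw [← htw, ← he1def]; linarith
  have he10 : 0 < e1 := lt_of_le_of_ne (rep_nonneg _) (Ne.symm he1ne0)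
  -- level comparison gives goodness
  have hrnotM : r ∉ preSeq θ M := hrM
  obtain ⟨l, hlM, -, hrgood⟩ := level_ge hrPre hrnotM
  have hql : q ∈ preSeq θ l := preSeq_mono hlM hqM
  have hgood : r ∈ goodPair q.1 q.2 := hrgood q hql (Pre_offdiag hθ hqPre)
  -- crossing contradiction
  have hA : rep (q.1 - u) < rep (r.2 - u) := by rw [← hd1def, ← htr2def]; linarith
  have hB : rep (q.1 - u) < rep (q.2 - u) := by rw [← hd1def, ← htq2def]; linarith
  have hC : rep (r.1 - u) < rep (q.2 - u) := by rw [← he1def, ← htq2def]; linarith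
  have hcross1 : r.2 ∈ arc q.1 q.2 := by
    rw [mem_arc, rep_diff_base (o := u) hA, rep_diff_base (o := u) hB,
      ← htr2def, ← htq2def, ← hd1def]
    constructor <;> linarith
  have hcross2 : r.1 ∈ arc q.2 q.1 := by
    rw [mem_arc, rep_diff_base' (o := u) hC, rep_diff_base' (o := u) hB,
      ← he1def, ← htq2def, ← hd1def]
    constructor <;> linarith
  have hnotgood : (r.2, r.1) ∉ goodPair q.1 q.2 :=
    not_good_of_cross (Pre_offdiag hθ hqPre) hcross1 hcross2
  apply hnotgood
  have := goodPair_swap_mem.1 hgood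
  simpa [Prod.swap] using this

end Core

section CoreMinus
variable {θ : ℝ} (hθ : θ ∈ Ioo (0:ℝ) 1)

include hθ in
lemma sep_wu {u w : 𝕊} (hu : u ∈ PS θ) (hw : w ∈ PS θ) {q : 𝕋} (hqPre : q ∈ Pre θ)
    (h1 : 0 < rep (q.1 - u)) (h2 : rep (q.1 - u) < rep (w - u))
    (h3 : rep (w - u) < rep (q.2 - u)) : q ∈ Sset θ := by
  have hq2u : q.2 - u ≠ 0 := by
    intro hh
    rw [hh, rep_zero] at h3
    have := rep_nonneg (w - u)
    linarith
  have hd : rep (q.1 - u) < rep (q.2 - u) := by linarith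
  have hmem1 : w ∈ arc q.1 q.2 := by
    rw [mem_arc, rep_diff_base h2, rep_diff_base hd]
    constructor <;> linarith
  have hmem2 : u ∈ arc q.2 q.1 := by
    rw [mem_arc, show u - q.2 = -(q.2 - u) by abel, rep_neg hq2u, rep_diff_base' hd]
    have := rep_lt_one (q.2 - u)
    constructor <;> linarith
  exact ⟨hqPre, Or.inl (sep_iff.2 ⟨Pre_offdiag hθ hqPre, w, hw, u, hu, hmem1, hmem2⟩)⟩

include hθ in
lemma core_minus {u y y' : 𝕊} (hu : u ∈ PS θ)
    (hyPS : y ∉ PS θ) (hy'PS : y' ∉ PS θ)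
    (hyu : y ≠ u) (hy'u : y' ≠ u)
    (horder : rep (y' - u) < rep (y - u))
    (hfree' : ∀ w ∈ PS θ, w ∉ arc y' u)
    (haccy : AccPt ((u, y) : 𝕋) (𝓟 (Pre θ)))
    (haccy' : AccPt ((u, y') : 𝕋) (𝓟 (Pre θ)))
    (hncy : ((u, y) : 𝕋) ∉ clusterS θ) (hncy' : ((u, y') : 𝕋) ∉ clusterS θ) : False := by
  set ty := rep (y - u) with hty
  set c' := rep (y' - u) with hc'
  have hc'0 : 0 < c' := rep_pos (sub_ne_zero_of_ne' (Ne.symm hy'u))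
  have hty1 : ty < 1 := rep_lt_one _
  obtain ⟨w, hw, hwu⟩ := PS_pair hθ u hu
  set tw := rep (w - u) with htw
  have htw0 : 0 < tw := rep_pos (sub_ne_zero_of_ne' (fun hh => hwu hh.symm))
  have htwc' : tw < c' := by
    have hnotarc := hfree' w hw
    rw [mem_arc_rev (Ne.symm hy'u)] at hnotarc
    push_neg at hnotarc
    rw [← hc', ← htw] at hnotarc
    rcases lt_or_eq_of_le hnotarc with h | h
    · exact h
    · exfalso
      have hyw : w = y' := by
        apply sub_left_inj'
        apply rep_injective
        rw [← htw, ← hc', h]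
      exact hy'PS (hyw ▸ hw)
  set δ := min (tw/2) (min ((c' - tw)/2) (min ((ty - c')/2) ((1 - ty)/2))) with hδdef
  have hδ0 : 0 < δ := by
    apply lt_min (by linarith)
    apply lt_min (by linarith)
    exact lt_min (by linarith) (by linarith)
  have hh1 : δ ≤ tw/2 := by rw [hδdef]; exact min_le_left _ _
  have hh2 : δ ≤ (c' - tw)/2 := by
    rw [hδdef]; exact le_trans (min_le_right _ _) (min_le_left _ _)
  have hh3 : δ ≤ (ty - c')/2 := by
    rw [hδdef]
    exact le_trans (min_le_right _ _) (le_trans (min_le_right _ _) (min_le_left _ _))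
  have hh4 : δ ≤ (1 - ty)/2 := by
    rw [hδdef]
    exact le_trans (min_le_right _ _) (le_trans (min_le_right _ _) (min_le_right _ _))
  have hδ1 : 2 * δ ≤ tw := by linarith
  have hδ2 : 2 * δ ≤ c' - tw := by linarith
  have hδ3 : 2 * δ ≤ ty - c' := by linarith
  have hδ4 : 2 * δ ≤ 1 - ty := by linarith
  have hδhalf : δ ≤ 1/2 := by
    have := rep_lt_one (w - u)
    linarith
  -- pick q near (u, y')
  obtain ⟨q, hqPre, -, hqS, hqne, hq1, hq2⟩ :=
    pick_near (finite_empty) haccy' hncy' hδ0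
  have htq2 : c' - δ < rep (q.2 - u) ∧ rep (q.2 - u) < c' + δ :=
    coord_near hδ0 hδhalf (by rw [← hc']; linarith) (by rw [← hc']; linarith) hq2
  set tq2 := rep (q.2 - u) with htq2def
  set d1 := rep (q.1 - u) with hd1def
  have hq1cases : d1 < δ ∨ 1 - δ < d1 := (mem_nhd_iff hδ0 hδhalf).1 hq1
  have hd1ne0 : d1 ≠ 0 := by
    intro h0
    apply hqS
    have : q.1 = u := by
      have := rep_eq_zero_iff.1 (by rw [← hd1def]; exact h0)
      rwa [sub_eq_zero] at this
    exact ⟨hqPre, Or.inr (Or.inl (this ▸ hu))⟩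
  have hd10 : 0 < d1 := lt_of_le_of_ne (rep_nonneg _) (Ne.symm hd1ne0)
  have hd1big : 1 - δ < d1 := by
    rcases hq1cases with h | h
    · exfalso
      apply hqS
      refine sep_wu hθ hu hw hqPre ?_ ?_ ?_
      · rw [← hd1def]; linarith
      · rw [← hd1def, ← htw]; linarith
      · rw [← htw, ← htq2def]; linarith
    · exact h
  -- level of q
  obtain ⟨M, hqM⟩ := mem_iUnion.1 hqPre
  set ε₂ := min δ (1 - d1) with hε₂def
  have hd11 : d1 < 1 := rep_lt_one _
  have hε₂0 : 0 < ε₂ := lt_min hδ0 (by linarith)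
  have hε₂δ : ε₂ ≤ δ := min_le_left _ _
  have hε₂d1 : ε₂ ≤ 1 - d1 := min_le_right _ _
  have hε₂half : ε₂ ≤ 1/2 := le_trans hε₂δ hδhalf
  obtain ⟨r, hrPre, hrM, hrS, hrne, hr1, hr2⟩ :=
    pick_near (preSeq_finite M) haccy hncy hε₂0
  have htr2 : ty - ε₂ < rep (r.2 - u) ∧ rep (r.2 - u) < ty + ε₂ :=
    coord_near hε₂0 hε₂half (by rw [← hty]; linarith) (by rw [← hty]; linarith) hr2
  set tr2 := rep (r.2 - u) with htr2def
  set e1 := rep (r.1 - u) with he1def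
  have hr1cases : e1 < ε₂ ∨ 1 - ε₂ < e1 := (mem_nhd_iff hε₂0 hε₂half).1 hr1
  have he1ne0 : e1 ≠ 0 := by
    intro h0
    apply hrS
    have : r.1 = u := by
      have := rep_eq_zero_iff.1 (by rw [← he1def]; exact h0)
      rwa [sub_eq_zero] at this
    exact ⟨hrPre, Or.inr (Or.inl (this ▸ hu))⟩
  have he1big : 1 - ε₂ < e1 := by
    rcases hr1cases with h | h
    · exfalso
      apply hrS
      refine sep_wu hθ hu hw hrPre ?_ ?_ ?_
      · rw [← he1def]
        exact lt_of_le_of_ne (rep_nonneg _) (Ne.symm he1ne0)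
      · rw [← he1def, ← htw]; linarith
      · rw [← htw, ← htr2def]; linarith
    · exact h
  -- level comparison
  have hrnotM : r ∉ preSeq θ M := hrM
  obtain ⟨l, hlM, -, hrgood⟩ := level_ge hrPre hrnotM
  have hql : q ∈ preSeq θ l := preSeq_mono hlM hqM
  have hgood : r ∈ goodPair q.1 q.2 := hrgood q hql (Pre_offdiag hθ hqPre)
  -- crossing contradiction : r.1 ∈ arc q.1 q.2 and r.2 ∈ arc q.2 q.1
  have hA : rep (q.1 - u) < rep (r.1 - u) := by rw [← hd1def, ← he1def]; linarith
  have hB : rep (q.2 - u) < rep (q.1 - u) := by rw [← hd1def, ← htq2def]; linarith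
  have hC : rep (q.2 - u) < rep (r.2 - u) := by rw [← htr2def, ← htq2def]; linarith
  have he11 : e1 < 1 := by rw [he1def]; exact rep_lt_one _
  have hcross1 : r.1 ∈ arc q.1 q.2 := by
    rw [mem_arc, rep_diff_base (o := u) hA, rep_diff_base' (o := u) hB,
      ← he1def, ← htq2def, ← hd1def]
    constructor <;> linarith
  have hcross2 : r.2 ∈ arc q.2 q.1 := by
    rw [mem_arc, rep_diff_base (o := u) hC, rep_diff_base (o := u) hB,
      ← htr2def, ← htq2def, ← hd1def]
    constructor <;> linarith
  have hnotgood : (r.1, r.2) ∉ goodPair q.1 q.2 :=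
    not_good_of_cross (Pre_offdiag hθ hqPre) hcross1 hcross2
  exact hnotgood hgood

end CoreMinus


section Fin
variable {θ : ℝ} (hθ : θ ∈ Ioo (0:ℝ) 1) (hrat : ∃ q : ℚ, (q : ℝ) = θ)

noncomputable def Bp (θ : ℝ) : Set 𝕋 :=
  {p : 𝕋 | p ∈ Xset θ \ clusterS θ ∧ p.1 ∈ PS θ ∧ p.2 ∉ PS θ ∧ ∀ w ∈ PS θ, w ∉ arc p.1 p.2}

noncomputable def Bm (θ : ℝ) : Set 𝕋 :=
  {p : 𝕋 | p ∈ Xset θ \ clusterS θ ∧ p.1 ∈ PS θ ∧ p.2 ∉ PS θ ∧ ∀ w ∈ PS θ, w ∉ arc p.2 p.1}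

include hθ in
lemma Bp_fiber_subsingleton (u : 𝕊) : Set.Subsingleton {p ∈ Bp θ | p.1 = u} := by
  rintro p ⟨⟨⟨⟨⟨haccy, hney⟩, hSI⟩, hncy⟩, hu, hyPS, hfree⟩, h1⟩
         p' ⟨⟨⟨⟨⟨haccy', hney'⟩, hSI'⟩, hncy'⟩, hu', hy'PS, hfree'⟩, h1'⟩
  have hpe : p = (u, p.2) := by rw [Prod.ext_iff]; exact ⟨h1, rfl⟩
  have hpe' : p' = (u, p'.2) := by rw [Prod.ext_iff]; exact ⟨h1', rfl⟩
  rcases eq_or_ne p.2 p'.2 with he | hyy'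
  · rw [hpe, hpe', he]
  · exfalso
    rw [hpe] at haccy hncy
    rw [hpe'] at haccy' hncy'
    rw [h1] at hney hfree hu
    rw [h1'] at hney' hfree'
    have hry : rep (p.2 - u) ≠ rep (p'.2 - u) := fun h => hyy' (sub_left_inj' (rep_injective h))
    rcases lt_or_gt_of_ne hry with h | h
    · exact core_plus hθ hu hyPS hy'PS (Ne.symm hney) (Ne.symm hney') h hfree'
        haccy haccy' hncy hncy'
    · exact core_plus hθ hu hy'PS hyPS (Ne.symm hney') (Ne.symm hney) h hfree
        haccy' haccy hncy' hncy

include hθ in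
lemma Bm_fiber_subsingleton (u : 𝕊) : Set.Subsingleton {p ∈ Bm θ | p.1 = u} := by
  rintro p ⟨⟨⟨⟨⟨haccy, hney⟩, hSI⟩, hncy⟩, hu, hyPS, hfree⟩, h1⟩
         p' ⟨⟨⟨⟨⟨haccy', hney'⟩, hSI'⟩, hncy'⟩, hu', hy'PS, hfree'⟩, h1'⟩
  have hpe : p = (u, p.2) := by rw [Prod.ext_iff]; exact ⟨h1, rfl⟩
  have hpe' : p' = (u, p'.2) := by rw [Prod.ext_iff]; exact ⟨h1', rfl⟩
  rcases eq_or_ne p.2 p'.2 with he | hyy'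
  · rw [hpe, hpe', he]
  · exfalso
    rw [hpe] at haccy hncy
    rw [hpe'] at haccy' hncy'
    rw [h1] at hney hfree hu
    rw [h1'] at hney' hfree'
    have hry : rep (p.2 - u) ≠ rep (p'.2 - u) := fun h => hyy' (sub_left_inj' (rep_injective h))
    rcases lt_or_gt_of_ne hry with h | h
    · exact core_minus hθ hu hy'PS hyPS (Ne.symm hney') (Ne.symm hney) h hfree
        haccy' haccy hncy' hncy
    · exact core_minus hθ hu hyPS hy'PS (Ne.symm hney) (Ne.symm hney') h hfree'
        haccy haccy' hncy hncy'

include hθ hrat in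
lemma Bp_finite : (Bp θ).Finite := by
  have hsub : Bp θ ⊆ ⋃ u ∈ PS θ, {p ∈ Bp θ | p.1 = u} := by
    intro p hp
    exact mem_iUnion₂.2 ⟨p.1, hp.2.1, hp, rfl⟩
  exact Set.Finite.subset
    (Set.Finite.biUnion (PS_finite hrat) (fun u _ => (Bp_fiber_subsingleton hθ u).finite)) hsub

include hθ hrat in
lemma Bm_finite : (Bm θ).Finite := by
  have hsub : Bm θ ⊆ ⋃ u ∈ PS θ, {p ∈ Bm θ | p.1 = u} := by
    intro p hp
    exact mem_iUnion₂.2 ⟨p.1, hp.2.1, hp, rfl⟩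
  exact Set.Finite.subset
    (Set.Finite.biUnion (PS_finite hrat) (fun u _ => (Bm_fiber_subsingleton hθ u).finite)) hsub

lemma XmC_case {p : 𝕋} (hp : p ∈ Xset θ \ clusterS θ) (h1 : p.1 ∈ PS θ) (h2 : p.2 ∉ PS θ) :
    p ∈ Bp θ ∪ Bm θ := by
  obtain ⟨⟨⟨hacc, hne⟩, hSI⟩, hnc⟩ := hp
  have hns : ¬ SepP θ p := by
    intro hsep
    exact hnc (sep_mem_clusterS hacc hsep)
  rcases not_sep_cases hne hns with h | h
  · exact Or.inl ⟨⟨⟨⟨hacc, hne⟩, hSI⟩, hnc⟩, h1, h2, h⟩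
  · exact Or.inr ⟨⟨⟨⟨hacc, hne⟩, hSI⟩, hnc⟩, h1, h2, h⟩

lemma XmC_cover : Xset θ \ clusterS θ ⊆
    ((PS θ ×ˢ PS θ) ∪ (Bp θ ∪ Bm θ)) ∪ Prod.swap '' (Bp θ ∪ Bm θ) := by
  intro p hp
  have hp' := hp
  obtain ⟨⟨⟨hacc, hne⟩, hSI⟩, hnc⟩ := hp'
  have hInt : IntP θ p := by
    rcases hSI with h | h
    · exact absurd (sep_mem_clusterS hacc h) hnc
    · exact h
  rcases hInt with h1 | h2
  · by_cases h2 : p.2 ∈ PS θ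
    · exact Or.inl (Or.inl ⟨h1, h2⟩)
    · exact Or.inl (Or.inr (XmC_case hp h1 h2))
  · by_cases h1 : p.1 ∈ PS θ
    · exact Or.inl (Or.inl ⟨h1, h2⟩)
    · right
      have hswap := swap_mem_XmC hp
      have hmem : p.swap ∈ Bp θ ∪ Bm θ := XmC_case hswap (by simpa using h2) (by simpa using h1)
      exact ⟨p.swap, hmem, Prod.swap_swap p⟩

include hθ hrat in
lemma XmC_finite : (Xset θ \ clusterS θ).Finite := by
  apply Set.Finite.subset _ (XmC_cover)
  apply Set.Finite.union
  · apply Set.Finite.union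
    · exact (PS_finite hrat).prod (PS_finite hrat)
    · exact (Bp_finite hθ hrat).union (Bm_finite hθ hrat)
  · exact ((Bp_finite hθ hrat).union (Bm_finite hθ hrat)).image _

include hθ hrat in
lemma HmC_finite : (Hset θ \ clusterS θ).Finite := by
  have hsub : Hset θ \ clusterS θ ⊆ (Xset θ \ clusterS θ) ∪ Pdiag θ := by
    rintro p ⟨hp, hnc⟩
    rcases hp with h | h
    · exact Or.inl ⟨h, hnc⟩
    · exact Or.inr h
  exact Set.Finite.subset ((XmC_finite hθ hrat).union (Pdiag_finite hrat)) hsub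

end Fin


/-- For rational `θ ∈ (ℝ/ℤ) ∖ {0}` (with representative `θ̂ ∈ (0,1)`),
the combinatorial Hubbard tree `H_θ` and the set `cluster(S_θ)` of accumulation points
of `S_θ` are compact and `F`-forward-invariant; moreover `cluster(S_θ) ⊆ H_θ` and
`H_θ ∖ cluster(S_θ)` is finite. -/
theorem hubbardTree_compact_invariant (θ : ℝ) (hθ : θ ∈ Ioo (0 : ℝ) 1)
    (hrat : ∃ q : ℚ, (q : ℝ) = θ) :
    IsCompact (Hset θ) ∧ IsCompact (clusterS θ) ∧
    MapsTo F (Hset θ) (Hset θ) ∧ MapsTo F (clusterS θ) (clusterS θ) ∧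
    clusterS θ ⊆ Hset θ ∧ (Hset θ \ clusterS θ).Finite := by
  exact ⟨isCompact_Hset hθ hrat, isCompact_clusterS, mapsTo_Hset hθ, mapsTo_clusterS hθ,
    cluster_subset_Hset hθ hrat, HmC_finite hθ hrat⟩
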